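/- arXiv:0705.0518 — 2 statements merged into one kernel-verified Lean document; each statement's English description precedes it below -/
import Mathlib

section
/- Let W denote an irreducible T-module with endpoint r, set d = D − 2r, and let u ∈ E_r W be nonzero. Then A^ε acts on the basis E*_r u, ..., E*_{r+d} u by: for 0 ≤ j ≤ d, A^ε(E*_{r+j} u) = i(d−j+1)·E*_{r+j−1} u − i(j+1)·E*_{r+j+1} u, where the terms with index r−1 or r+d+1 are interpreted as 0. -/
noncomputable section

open Matrix Finset

/-- Vertex set of the hypercube `Q_D`: binary strings of length `D`. -/
abbrev Vtx (D : ℕ) := Fin D → Bool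

/-- Hamming weight of a vertex, i.e. its distance to the fixed vertex `x = (0,...,0)`. -/
def wt {D : ℕ} (y : Vtx D) : ℕ := (Finset.univ.filter fun k => y k = true).card

/-- The adjacency matrix of the hypercube `Q_D`: `A_{yz} = 1` iff `y,z` differ in exactly
one coordinate. -/
def adjMat (D : ℕ) : Matrix (Vtx D) (Vtx D) ℂ :=
  fun y z => if (Finset.univ.filter fun k => y k ≠ z k).card = 1 then 1 else 0

/-- The dual adjacency matrix of `Q_D` with respect to `x = (0,...,0)`: the diagonal
matrix with `(y,y)`-entry `D - 2·wt(y)`. -/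
def dualAdjMat (D : ℕ) : Matrix (Vtx D) (Vtx D) ℂ :=
  Matrix.diagonal fun y => (D : ℂ) - 2 * (wt y : ℂ)

/-- The imaginary adjacency matrix `Aᵉ = -i(AA* - A*A)/2`. -/
def imagAdjMat (D : ℕ) : Matrix (Vtx D) (Vtx D) ℂ :=
  (-Complex.I / 2) • (adjMat D * dualAdjMat D - dualAdjMat D * adjMat D)

/-- The 2×2 matrix `P₁` with entries `(P₁)₀₀ = 1`, `(P₁)₀₁ = 1`, `(P₁)₁₀ = -i`,
`(P₁)₁₁ = i`. -/
def P1 : Bool → Bool → ℂ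
  | false, false => 1
  | false, true  => 1
  | true,  false => -Complex.I
  | true,  true  => Complex.I

/-- The D-fold Kronecker power `P = P₁^{⊗D}`, i.e. `P_{yz} = ∏_k (P₁)_{y_k z_k}`. -/
def Pmat (D : ℕ) : Matrix (Vtx D) (Vtx D) ℂ :=
  fun y z => ∏ k : Fin D, P1 (y k) (z k)

/-- The eigenvalues `θ_j = D - 2j`. -/
def theta (D j : ℕ) : ℂ := (D : ℂ) - 2 * (j : ℂ)

/-- The `i`-th primitive idempotent `E_i = ∏_{0 ≤ j ≤ D, j ≠ i} (A - θ_j I)/(θ_i - θ_j)`. -/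
def Emat (D i : ℕ) : Matrix (Vtx D) (Vtx D) ℂ :=
  Polynomial.aeval (adjMat D)
    (∏ j ∈ (Finset.range (D + 1)).erase i,
      Polynomial.C ((theta D i - theta D j)⁻¹) * (Polynomial.X - Polynomial.C (theta D j)))

/-- The `i`-th dual idempotent `E*_i`: diagonal with `(y,y)`-entry `1` if `wt(y) = i`. -/
def EstarMat (D i : ℕ) : Matrix (Vtx D) (Vtx D) ℂ :=
  Matrix.diagonal fun y => if wt y = i then 1 else 0

/-- The `i`-th imaginary idempotent `Eᵉ_i = P⁻¹ E_i P`. -/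
def EepsMat (D i : ℕ) : Matrix (Vtx D) (Vtx D) ℂ :=
  (Pmat D)⁻¹ * Emat D i * Pmat D

/-- `W` is a `T`-module: a subspace of `ℂ^X` invariant under `A` and `A*`. -/
def IsTMod (D : ℕ) (W : Submodule ℂ (Vtx D → ℂ)) : Prop :=
  (∀ w ∈ W, (adjMat D).mulVec w ∈ W) ∧ (∀ w ∈ W, (dualAdjMat D).mulVec w ∈ W)

/-- `W` is an irreducible `T`-module. -/
def IsIrredTMod (D : ℕ) (W : Submodule ℂ (Vtx D → ℂ)) : Prop :=
  IsTMod D W ∧ W ≠ ⊥ ∧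
    ∀ U : Submodule ℂ (Vtx D → ℂ), IsTMod D U → U ≤ W → U = ⊥ ∨ U = W

/-- The Hermitian inner product `⟨u,v⟩ = uᵗ · conj v` (linear in the first argument). -/
def inp {D : ℕ} (u v : Vtx D → ℂ) : ℂ := ∑ y, u y * (starRingEnd ℂ) (v y)

namespace HC
variable {D : ℕ}

def adj {D : ℕ} (y z : Vtx D) : Prop := (Finset.univ.filter fun k => y k ≠ z k).card = 1

instance : ∀ y z : Vtx D, Decidable (adj y z) := fun _ _ => by unfold adj; infer_instance

lemma adj_comm {y z : Vtx D} : adj y z ↔ adj z y := by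
  unfold adj
  constructor <;> intro h <;> (rw [← h]; congr 1; apply Finset.filter_congr; intros; simp [ne_comm])

lemma wt_le (y : Vtx D) : wt y ≤ D := by
  classical
  simpa [wt] using (Finset.card_filter_le univ _).trans (by simp)

lemma unique_diff {y z : Vtx D} (h : adj y z) :
    ∃ k, y k ≠ z k ∧ ∀ m, m ≠ k → y m = z m := by
  classical
  obtain ⟨k, hk⟩ := Finset.card_eq_one.mp h
  refine ⟨k, ?_, ?_⟩
  · have : k ∈ (Finset.univ.filter fun k => y k ≠ z k) := by rw [hk]; exact Finset.mem_singleton_self k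
    simpa using this
  · intro m hm
    by_contra hmz
    have : m ∈ (Finset.univ.filter fun k => y k ≠ z k) := by simp [hmz]
    rw [hk] at this
    exact hm (Finset.mem_singleton.mp this)

lemma wt_exchange {y z : Vtx D} {k : Fin D} (h : ∀ m, m ≠ k → y m = z m) :
    wt y + (if z k then 1 else 0) = wt z + (if y k then 1 else 0) := by
  classical
  have hy : wt y = ∑ m : Fin D, (if y m then 1 else 0) := by
    rw [wt, Finset.card_filter]
  have hz : wt z = ∑ m : Fin D, (if z m then 1 else 0) := by
    rw [wt, Finset.card_filter]
  have hsplit : ∀ w : Vtx D, ∑ m : Fin D, (if w m then 1 else 0)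
      = (if w k then 1 else 0) + ∑ m ∈ Finset.univ.erase k, (if w m then 1 else 0) := by
    intro w
    rw [← Finset.add_sum_erase _ _ (Finset.mem_univ k)]
  have hrest : ∑ m ∈ Finset.univ.erase k, (if y m then (1:ℕ) else 0)
      = ∑ m ∈ Finset.univ.erase k, (if z m then 1 else 0) := by
    apply Finset.sum_congr rfl
    intro m hm
    rw [h m (Finset.mem_erase.mp hm).1]
  rw [hy, hz, hsplit y, hsplit z, hrest]
  omega

lemma step_up {y w : Vtx D} {k : Fin D} (hk : y k ≠ w k) (hm : ∀ m, m ≠ k → y m = w m)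
    (h : wt y + 1 = wt w) : y k = false ∧ w k = true := by
  have := wt_exchange hm
  cases hyk : y k <;> cases hwk : w k <;> simp_all <;> omega

lemma step_down {y w : Vtx D} {k : Fin D} (hk : y k ≠ w k) (hm : ∀ m, m ≠ k → y m = w m)
    (h : wt w + 1 = wt y) : y k = true ∧ w k = false := by
  have := wt_exchange hm
  cases hyk : y k <;> cases hwk : w k <;> simp_all <;> omega

lemma adj_wt {y z : Vtx D} (h : adj y z) : wt y + 1 = wt z ∨ wt z + 1 = wt y := by
  obtain ⟨k, hk, hm⟩ := unique_diff h
  have := wt_exchange (y := y) (z := z) hm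
  cases hyk : y k <;> cases hzk : z k <;> simp_all <;> omega

def Lm (D : ℕ) : Matrix (Vtx D) (Vtx D) ℂ :=
  fun y z => if adj y z ∧ wt y + 1 = wt z then 1 else 0
def Rm (D : ℕ) : Matrix (Vtx D) (Vtx D) ℂ :=
  fun y z => if adj y z ∧ wt z + 1 = wt y then 1 else 0

lemma adj_decomp : adjMat D = Lm D + Rm D := by
  funext y z
  simp only [adjMat, Lm, Rm, Matrix.add_apply]
  by_cases h : adj y z
  · rcases adj_wt h with h1 | h1
    · have h2 : ¬ (wt z + 1 = wt y) := by omega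
      simp [h, h1, h2, adj]
    · have h2 : ¬ (wt y + 1 = wt z) := by omega
      simp [h, h1, h2, adj]
  · simp [h, adj] at *
    simp [h]

lemma Rm_eq_transpose : Rm D = (Lm D)ᵀ := by
  funext y z
  simp only [Rm, Lm, Matrix.transpose_apply]
  simp only [show adj y z ↔ adj z y from adj_comm]

/-- the entries are real (0 or 1) -/
lemma Lm_real (y z : Vtx D) : (starRingEnd ℂ) (Lm D y z) = Lm D y z := by
  simp only [Lm]; split_ifs <;> simp

lemma sum_boole_mul {P Q : Vtx D → Prop} [DecidablePred P] [DecidablePred Q] :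
    (∑ w, (if P w then (1:ℂ) else 0) * (if Q w then 1 else 0))
      = ((Finset.univ.filter fun w => P w ∧ Q w).card : ℂ) := by
  rw [Finset.card_filter]
  push_cast
  apply Finset.sum_congr rfl
  intro w _
  by_cases h1 : P w <;> by_cases h2 : Q w <;> simp [h1, h2]

lemma filter_up_eq (y : Vtx D) :
    (Finset.univ.filter fun w => adj y w ∧ wt y + 1 = wt w)
      = (Finset.univ.filter fun k : Fin D => y k = false).image
          (fun k => Function.update y k true) := by
  classical
  ext w
  simp only [Finset.mem_filter, Finset.mem_image, Finset.mem_univ, true_and]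
  constructor
  · rintro ⟨hadj, hwt⟩
    obtain ⟨k, hk, hm⟩ := unique_diff hadj
    obtain ⟨hy, hw⟩ := step_up hk hm hwt
    refine ⟨k, hy, ?_⟩
    funext m
    by_cases hmk : m = k
    · subst hmk; simp [hw]
    · simp [Function.update_of_ne hmk, (hm m hmk).symm]
  · rintro ⟨k, hy, rfl⟩
    have hdiff : ∀ m, m ≠ k → y m = Function.update y k true m := by
      intro m hm; simp [Function.update_of_ne hm]
    have hk : y k ≠ Function.update y k true k := by simp [hy]
    constructor
    · unfold adj
      have : (Finset.univ.filter fun m => y m ≠ Function.update y k true m) = {k} := by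
        ext m
        simp only [Finset.mem_filter, Finset.mem_univ, true_and, Finset.mem_singleton]
        constructor
        · intro hne; by_contra hmk; exact hne (hdiff m hmk)
        · rintro rfl; exact hk
      rw [this]; simp
    · have := wt_exchange hdiff
      simp [hy] at this
      omega

lemma filter_down_eq (y : Vtx D) :
    (Finset.univ.filter fun w => adj y w ∧ wt w + 1 = wt y)
      = (Finset.univ.filter fun k : Fin D => y k = true).image
          (fun k => Function.update y k false) := by
  classical
  ext w
  simp only [Finset.mem_filter, Finset.mem_image, Finset.mem_univ, true_and]
  constructor
  · rintro ⟨hadj, hwt⟩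
    obtain ⟨k, hk, hm⟩ := unique_diff hadj
    obtain ⟨hy, hw⟩ := step_down hk hm hwt
    refine ⟨k, hy, ?_⟩
    funext m
    by_cases hmk : m = k
    · subst hmk; simp [hw]
    · simp [Function.update_of_ne hmk, (hm m hmk).symm]
  · rintro ⟨k, hy, rfl⟩
    have hdiff : ∀ m, m ≠ k → y m = Function.update y k false m := by
      intro m hm; simp [Function.update_of_ne hm]
    have hk : y k ≠ Function.update y k false k := by simp [hy]
    constructor
    · unfold adj
      have : (Finset.univ.filter fun m => y m ≠ Function.update y k false m) = {k} := by
        ext m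
        simp only [Finset.mem_filter, Finset.mem_univ, true_and, Finset.mem_singleton]
        constructor
        · intro hne; by_contra hmk; exact hne (hdiff m hmk)
        · rintro rfl; exact hk
      rw [this]; simp
    · have := wt_exchange hdiff
      simp [hy] at this
      omega

lemma card_up (y : Vtx D) :
    (Finset.univ.filter fun w => adj y w ∧ wt y + 1 = wt w).card = D - wt y := by
  classical
  rw [filter_up_eq]
  rw [Finset.card_image_of_injOn]
  · have := Finset.card_filter_add_card_filter_not (s := (Finset.univ : Finset (Fin D)))
      (p := fun k => y k = true)
    have h2 : (Finset.univ.filter fun k : Fin D => ¬ y k = true)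
        = (Finset.univ.filter fun k : Fin D => y k = false) := by
      apply Finset.filter_congr; intros; simp
    rw [h2] at this
    have := this
    simp only [Finset.card_univ, Fintype.card_fin] at this
    unfold wt
    omega
  · intro a ha b hb hab
    by_contra hne
    have h3 : Function.update y a true a = Function.update y b true a := by
      simpa using congrFun hab a
    rw [Function.update_of_ne hne] at h3
    simp only [Finset.mem_coe, Finset.mem_filter] at ha
    rw [Function.update_self, ha.2] at h3
    exact Bool.noConfusion h3

lemma card_down (y : Vtx D) :
    (Finset.univ.filter fun w => adj y w ∧ wt w + 1 = wt y).card = wt y := by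
  classical
  rw [filter_down_eq]
  rw [Finset.card_image_of_injOn]
  · rfl
  · intro a ha b hb hab
    by_contra hne
    have h3 : Function.update y a false a = Function.update y b false a := by
      simpa using congrFun hab a
    rw [Function.update_of_ne hne] at h3
    simp only [Finset.mem_coe, Finset.mem_filter] at ha
    rw [Function.update_self, ha.2] at h3
    exact Bool.noConfusion h3

def phi {D : ℕ} (y z w : Vtx D) : Vtx D := fun k => xor (xor (y k) (z k)) (w k)

lemma phi_adj_left {y z w : Vtx D} (h : adj w z) : adj y (phi y z w) := by
  unfold adj
  have haux : ∀ k, (y k ≠ phi y z w k) ↔ (w k ≠ z k) := by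
    intro k; simp only [phi]; cases y k <;> cases z k <;> cases w k <;> simp
  have : (Finset.univ.filter fun k => y k ≠ phi y z w k)
      = Finset.univ.filter fun k => w k ≠ z k := by
    apply Finset.filter_congr; intro k _
    exact haux k
  rw [this]; exact h

lemma phi_adj_right {y z w : Vtx D} (h : adj y w) : adj (phi y z w) z := by
  unfold adj
  have haux : ∀ k, (phi y z w k ≠ z k) ↔ (y k ≠ w k) := by
    intro k; simp only [phi]; cases y k <;> cases z k <;> cases w k <;> simp
  have : (Finset.univ.filter fun k => phi y z w k ≠ z k)
      = Finset.univ.filter fun k => y k ≠ w k := by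
    apply Finset.filter_congr; intro k _
    exact haux k
  rw [this]; exact h

lemma phi_phi (y z w : Vtx D) : phi y z (phi y z w) = w := by
  funext k
  simp only [phi]
  cases y k <;> cases z k <;> cases w k <;> simp

lemma mid_up {y z w : Vtx D} (hyz : y ≠ z) (hyw : adj y w) (hwty : wt y + 1 = wt w)
    (hwz : adj w z) (hwtz : wt z + 1 = wt w) :
    wt (phi y z w) + 1 = wt y ∧ wt (phi y z w) + 1 = wt z := by
  classical
  obtain ⟨k₁, hk₁, hm₁⟩ := unique_diff hyw
  obtain ⟨k₂, hk₂, hm₂⟩ := unique_diff hwz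
  obtain ⟨hyk₁, hwk₁⟩ := step_up hk₁ hm₁ hwty
  obtain ⟨hzk₂, hwk₂⟩ := step_up (y := z) (w := w) (Ne.symm hk₂)
    (fun m hm => (hm₂ m hm).symm) hwtz
  have hk12 : k₁ ≠ k₂ := by
    rintro rfl
    apply hyz
    funext m
    by_cases hmk : m = k₁
    · subst hmk; rw [hyk₁, hzk₂]
    · rw [hm₁ m hmk, hm₂ m hmk]
  have hyk₂ : y k₂ = true := by rw [hm₁ k₂ (Ne.symm hk12)]; exact hwk₂
  have hzk₁ : z k₁ = true := by rw [← hm₂ k₁ hk12]; exact hwk₁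
  have hφk₂ : phi y z w k₂ = false := by simp [phi, hyk₂, hzk₂, hwk₂]
  have hφk₁ : phi y z w k₁ = false := by simp [phi, hyk₁, hzk₁, hwk₁]
  have hdy : ∀ m, m ≠ k₂ → y m = phi y z w m := by
    intro m hm
    show y m = xor (xor (y m) (z m)) (w m)
    rw [← hm₂ m hm]
    cases y m <;> cases w m <;> simp
  have hdz : ∀ m, m ≠ k₁ → z m = phi y z w m := by
    intro m hm
    show z m = xor (xor (y m) (z m)) (w m)
    rw [hm₁ m hm]
    cases z m <;> cases w m <;> simp
  constructor
  · have := wt_exchange hdy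
    rw [hφk₂, hyk₂] at this
    simpa using this.symm
  · have := wt_exchange hdz
    rw [hφk₁, hzk₁] at this
    simpa using this.symm

lemma mid_down {y z w : Vtx D} (hyz : y ≠ z) (hyw : adj y w) (hwty : wt w + 1 = wt y)
    (hwz : adj w z) (hwtz : wt w + 1 = wt z) :
    wt y + 1 = wt (phi y z w) ∧ wt z + 1 = wt (phi y z w) := by
  classical
  obtain ⟨k₁, hk₁, hm₁⟩ := unique_diff hyw
  obtain ⟨k₂, hk₂, hm₂⟩ := unique_diff hwz
  obtain ⟨hyk₁, hwk₁⟩ := step_down hk₁ hm₁ hwty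
  obtain ⟨hzk₂, hwk₂⟩ := step_down (y := z) (w := w) (Ne.symm hk₂)
    (fun m hm => (hm₂ m hm).symm) hwtz
  have hk12 : k₁ ≠ k₂ := by
    rintro rfl
    apply hyz
    funext m
    by_cases hmk : m = k₁
    · subst hmk; rw [hyk₁, hzk₂]
    · rw [hm₁ m hmk, hm₂ m hmk]
  have hyk₂ : y k₂ = false := by rw [hm₁ k₂ (Ne.symm hk12)]; exact hwk₂
  have hzk₁ : z k₁ = false := by rw [← hm₂ k₁ hk12]; exact hwk₁
  have hφk₂ : phi y z w k₂ = true := by simp [phi, hyk₂, hzk₂, hwk₂]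
  have hφk₁ : phi y z w k₁ = true := by simp [phi, hyk₁, hzk₁, hwk₁]
  have hdy : ∀ m, m ≠ k₂ → y m = phi y z w m := by
    intro m hm
    show y m = xor (xor (y m) (z m)) (w m)
    rw [← hm₂ m hm]
    cases y m <;> cases w m <;> simp
  have hdz : ∀ m, m ≠ k₁ → z m = phi y z w m := by
    intro m hm
    show z m = xor (xor (y m) (z m)) (w m)
    rw [hm₁ m hm]
    cases z m <;> cases w m <;> simp
  constructor
  · have := wt_exchange hdy
    rw [hφk₂, hyk₂] at this
    simpa using this
  · have := wt_exchange hdz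
    rw [hφk₁, hzk₁] at this
    simpa using this

lemma card_mid (y z : Vtx D) (hyz : y ≠ z) :
    (Finset.univ.filter fun w => (adj y w ∧ wt y + 1 = wt w) ∧ (adj w z ∧ wt z + 1 = wt w)).card
    = (Finset.univ.filter fun w =>
        (adj y w ∧ wt w + 1 = wt y) ∧ (adj w z ∧ wt w + 1 = wt z)).card := by
  classical
  apply Finset.card_bij' (i := fun w _ => phi y z w) (j := fun w _ => phi y z w)
  · intro w hw
    simp only [Finset.mem_filter, Finset.mem_univ, true_and] at hw ⊢
    obtain ⟨⟨hyw, hwty⟩, hwz, hwtz⟩ := hw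
    obtain ⟨h1, h2⟩ := mid_up hyz hyw hwty hwz hwtz
    exact ⟨⟨phi_adj_left hwz, h1⟩, phi_adj_right hyw, h2⟩
  · intro w hw
    simp only [Finset.mem_filter, Finset.mem_univ, true_and] at hw ⊢
    obtain ⟨⟨hyw, hwty⟩, hwz, hwtz⟩ := hw
    obtain ⟨h1, h2⟩ := mid_down hyz hyw hwty hwz hwtz
    exact ⟨⟨phi_adj_left hwz, h1⟩, phi_adj_right hyw, h2⟩
  · intro w _; exact phi_phi y z w
  · intro w _; exact phi_phi y z w

/-- the sl₂ commutator relation: `[L, R] = A*` -/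
lemma comm_LR : Lm D * Rm D - Rm D * Lm D = dualAdjMat D := by
  classical
  funext y z
  simp only [Matrix.sub_apply, Matrix.mul_apply, Lm, Rm, dualAdjMat, Matrix.diagonal_apply]
  have e1 : (∑ w, (if adj y w ∧ wt y + 1 = wt w then (1:ℂ) else 0) *
      (if adj w z ∧ wt z + 1 = wt w then 1 else 0))
      = ((Finset.univ.filter fun w => (adj y w ∧ wt y + 1 = wt w)
          ∧ (adj w z ∧ wt z + 1 = wt w)).card : ℂ) := sum_boole_mul
  have e2 : (∑ w, (if adj y w ∧ wt w + 1 = wt y then (1:ℂ) else 0) *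
      (if adj w z ∧ wt w + 1 = wt z then 1 else 0))
      = ((Finset.univ.filter fun w => (adj y w ∧ wt w + 1 = wt y)
          ∧ (adj w z ∧ wt w + 1 = wt z)).card : ℂ) := sum_boole_mul
  rw [e1, e2]
  by_cases hyz : y = z
  · subst hyz
    have f1 : (Finset.univ.filter fun w => (adj y w ∧ wt y + 1 = wt w)
          ∧ (adj w y ∧ wt y + 1 = wt w))
        = Finset.univ.filter fun w => adj y w ∧ wt y + 1 = wt w := by
      apply Finset.filter_congr; intro w _
      constructor
      · rintro ⟨h, _⟩; exact h
      · rintro ⟨h1, h2⟩; exact ⟨⟨h1, h2⟩, adj_comm.mp h1, h2⟩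
    have f2 : (Finset.univ.filter fun w => (adj y w ∧ wt w + 1 = wt y)
          ∧ (adj w y ∧ wt w + 1 = wt y))
        = Finset.univ.filter fun w => adj y w ∧ wt w + 1 = wt y := by
      apply Finset.filter_congr; intro w _
      constructor
      · rintro ⟨h, _⟩; exact h
      · rintro ⟨h1, h2⟩; exact ⟨⟨h1, h2⟩, adj_comm.mp h1, h2⟩
    rw [f1, f2, card_up, card_down]
    have hle := wt_le y
    simp only [if_pos rfl]
    push_cast [Nat.cast_sub hle]
    ring
  · rw [card_mid y z hyz]
    simp [hyz]

/-! ### level-shifting identities -/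

lemma Estar_Lm (i : ℕ) : EstarMat D i * Lm D = Lm D * EstarMat D (i + 1) := by
  funext y z
  simp only [EstarMat, Matrix.diagonal_mul, Matrix.mul_diagonal]
  simp only [Lm]
  by_cases h : adj y z ∧ wt y + 1 = wt z
  · rw [if_pos h]
    have : (wt y = i) ↔ (wt z = i + 1) := by omega
    by_cases h2 : wt y = i
    · rw [if_pos h2, if_pos (this.mp h2)]
    · rw [if_neg h2, if_neg (fun hc => h2 (this.mpr hc))]; ring
  · rw [if_neg h]; ring

lemma Estar_Rm (i : ℕ) : EstarMat D (i + 1) * Rm D = Rm D * EstarMat D i := by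
  funext y z
  simp only [EstarMat, Matrix.diagonal_mul, Matrix.mul_diagonal]
  simp only [Rm]
  by_cases h : adj y z ∧ wt z + 1 = wt y
  · rw [if_pos h]
    have : (wt y = i + 1) ↔ (wt z = i) := by omega
    by_cases h2 : wt y = i + 1
    · rw [if_pos h2, if_pos (this.mp h2)]
    · rw [if_neg h2, if_neg (fun hc => h2 (this.mpr hc))]; ring
  · rw [if_neg h]; ring

lemma Estar0_Rm : EstarMat D 0 * Rm D = 0 := by
  funext y z
  rw [EstarMat, Matrix.diagonal_mul]
  simp only [Rm, Matrix.zero_apply]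
  by_cases h : adj y z ∧ wt z + 1 = wt y
  · have : ¬ (wt y = 0) := by omega
    rw [if_neg this]; ring
  · rw [if_neg h]; ring

lemma Lm_Estar0 : Lm D * EstarMat D 0 = 0 := by
  funext y z
  rw [EstarMat, Matrix.mul_diagonal]
  simp only [Lm, Matrix.zero_apply]
  by_cases h : adj y z ∧ wt y + 1 = wt z
  · have : ¬ (wt z = 0) := by omega
    rw [if_neg this]; ring
  · rw [if_neg h]; ring

lemma Estar_mul_Estar {i j : ℕ} (h : i ≠ j) : EstarMat D i * EstarMat D j = 0 := by
  rw [EstarMat, EstarMat, Matrix.diagonal_mul_diagonal]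
  funext y z
  simp only [Matrix.diagonal_apply, Matrix.zero_apply]
  by_cases hyz : y = z
  · subst hyz
    rw [if_pos rfl]
    by_cases h1 : wt y = i
    · rw [if_pos h1, if_neg (show ¬ wt y = j by omega)]; ring
    · rw [if_neg h1]; ring
  · rw [if_neg hyz]

lemma sum_Estar : ∑ i ∈ Finset.range (D + 1), EstarMat D i = (1 : Matrix (Vtx D) (Vtx D) ℂ) := by
  funext y z
  rw [Matrix.sum_apply]
  simp only [EstarMat, Matrix.diagonal_apply, Matrix.one_apply]
  by_cases hyz : y = z
  · subst hyz
    simp only [Matrix.diagonal_apply_eq, Matrix.one_apply_eq, eq_self_iff_true, if_true]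
    rw [Finset.sum_ite_eq (Finset.range (D+1)) (wt y) (fun _ => (1:ℂ))]
    simp [Nat.lt_succ_iff, wt_le y]
  · simp [hyz]

lemma AAstar : adjMat D * dualAdjMat D - dualAdjMat D * adjMat D
    = (2 : ℂ) • Rm D - (2 : ℂ) • Lm D := by
  funext y z
  simp only [dualAdjMat, Matrix.sub_apply, Matrix.mul_diagonal, Matrix.diagonal_mul,
    adjMat, Lm, Rm, Matrix.smul_apply, smul_eq_mul]
  by_cases h : adj y z
  · have hcard : (Finset.univ.filter fun k => y k ≠ z k).card = 1 := h
    rcases adj_wt h with h1 | h1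
    · have h2 : ¬ (wt z + 1 = wt y) := by omega
      rw [if_pos hcard, if_pos (show adj y z ∧ wt y + 1 = wt z from ⟨h, h1⟩),
        if_neg (show ¬ (adj y z ∧ wt z + 1 = wt y) from fun hc => h2 hc.2)]
      have hz : (wt z : ℂ) = (wt y : ℂ) + 1 := by
        rw [← h1]; push_cast; ring
      rw [hz]; ring
    · have h2 : ¬ (wt y + 1 = wt z) := by omega
      rw [if_pos hcard, if_pos (show adj y z ∧ wt z + 1 = wt y from ⟨h, h1⟩),
        if_neg (show ¬ (adj y z ∧ wt y + 1 = wt z) from fun hc => h2 hc.2)]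
      have hy : (wt y : ℂ) = (wt z : ℂ) + 1 := by
        rw [← h1]; push_cast; ring
      rw [hy]; ring
  · have hcard : ¬ (Finset.univ.filter fun k => y k ≠ z k).card = 1 := h
    rw [if_neg hcard, if_neg (show ¬ (adj y z ∧ wt z + 1 = wt y) from fun hc => h hc.1),
      if_neg (show ¬ (adj y z ∧ wt y + 1 = wt z) from fun hc => h hc.1)]
    ring

lemma imag_eq : imagAdjMat D = Complex.I • Lm D - Complex.I • Rm D := by
  rw [imagAdjMat, AAstar]
  module

lemma Lm_decomp : Lm D = (2:ℂ)⁻¹ • adjMat D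
    - (4:ℂ)⁻¹ • (adjMat D * dualAdjMat D - dualAdjMat D * adjMat D) := by
  rw [AAstar, adj_decomp (D := D)]
  module

lemma Rm_decomp : Rm D = (2:ℂ)⁻¹ • adjMat D
    + (4:ℂ)⁻¹ • (adjMat D * dualAdjMat D - dualAdjMat D * adjMat D) := by
  rw [AAstar, adj_decomp (D := D)]
  module

/-! ### polynomial and closure lemmas -/

lemma pow_mulVec_mem {W : Submodule ℂ (Vtx D → ℂ)} {M : Matrix (Vtx D) (Vtx D) ℂ}
    (hM : ∀ w ∈ W, M.mulVec w ∈ W) (n : ℕ) {w : Vtx D → ℂ} (hw : w ∈ W) :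
    (M ^ n).mulVec w ∈ W := by
  induction n with
  | zero => simpa using hw
  | succ n ih =>
      rw [pow_succ', ← Matrix.mulVec_mulVec]
      exact hM _ ih

lemma aeval_mulVec_mem {W : Submodule ℂ (Vtx D → ℂ)} {M : Matrix (Vtx D) (Vtx D) ℂ}
    (hM : ∀ w ∈ W, M.mulVec w ∈ W) (p : Polynomial ℂ) {w : Vtx D → ℂ} (hw : w ∈ W) :
    (Polynomial.aeval M p).mulVec w ∈ W := by
  induction p using Polynomial.induction_on' with
  | add p q hp hq => rw [map_add, Matrix.add_mulVec]; exact add_mem hp hq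
  | monomial n a =>
      rw [Polynomial.aeval_monomial]
      have : (algebraMap ℂ (Matrix (Vtx D) (Vtx D) ℂ)) a * M ^ n = a • M ^ n := by
        rw [Algebra.algebraMap_eq_smul_one, smul_mul_assoc, one_mul]
      rw [this, Matrix.smul_mulVec]
      exact Submodule.smul_mem _ _ (pow_mulVec_mem hM n hw)

lemma aeval_diagonal (f : Vtx D → ℂ) (p : Polynomial ℂ) :
    Polynomial.aeval (Matrix.diagonal f) p
      = Matrix.diagonal (fun y => Polynomial.eval (f y) p) := by
  induction p using Polynomial.induction_on' with
  | add p q hp hq => rw [map_add, hp, hq, Matrix.diagonal_add]; simp [Polynomial.eval_add]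
  | monomial n a =>
      rw [Polynomial.aeval_monomial]
      rw [Algebra.algebraMap_eq_smul_one, smul_mul_assoc, one_mul, Matrix.diagonal_pow]
      funext y z
      by_cases hyz : y = z
      · subst hyz; simp [Matrix.diagonal_apply_eq, Polynomial.eval_monomial]
      · simp [Matrix.diagonal_apply_ne _ hyz, hyz]

lemma theta_injOn {i j : ℕ} (h : theta D i = theta D j) : i = j := by
  unfold theta at h
  have : (i : ℂ) = (j : ℂ) := by linear_combination (h) / (-2)
  exact_mod_cast this

/-- the Lagrange interpolation value -/
lemma lagrange_eval {i k : ℕ} (hi : i ≤ D) (hk : k ≤ D) :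
    Polynomial.eval (theta D k)
      (∏ j ∈ (Finset.range (D + 1)).erase i,
        Polynomial.C ((theta D i - theta D j)⁻¹) * (Polynomial.X - Polynomial.C (theta D j)))
      = if k = i then 1 else 0 := by
  rw [Polynomial.eval_prod]
  by_cases hki : k = i
  · subst hki
    rw [if_pos rfl]
    apply Finset.prod_eq_one
    intro j hj
    simp only [Polynomial.eval_mul, Polynomial.eval_C, Polynomial.eval_sub, Polynomial.eval_X]
    apply inv_mul_cancel₀
    intro hc
    exact (Finset.mem_erase.mp hj).1 (theta_injOn (by linear_combination -hc))
  · rw [if_neg hki]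
    apply Finset.prod_eq_zero (i := k)
    · exact Finset.mem_erase.mpr ⟨hki, Finset.mem_range.mpr (Nat.lt_succ_of_le hk)⟩
    · simp [Polynomial.eval_mul, Polynomial.eval_C, Polynomial.eval_sub, Polynomial.eval_X]

lemma Estar_eq_poly {i : ℕ} (hi : i ≤ D) :
    EstarMat D i = Polynomial.aeval (dualAdjMat D)
      (∏ j ∈ (Finset.range (D + 1)).erase i,
        Polynomial.C ((theta D i - theta D j)⁻¹) * (Polynomial.X - Polynomial.C (theta D j))) := by
  rw [show dualAdjMat D = Matrix.diagonal (fun y => theta D (wt y)) from by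
    funext y z; simp [dualAdjMat, theta], aeval_diagonal]
  unfold EstarMat
  funext y z
  by_cases hyz : y = z
  · subst hyz
    rw [Matrix.diagonal_apply_eq, Matrix.diagonal_apply_eq, lagrange_eval hi (wt_le y)]
  · rw [Matrix.diagonal_apply_ne _ hyz, Matrix.diagonal_apply_ne _ hyz]

/-! ### the Hadamard matrix and the minimal polynomial of `A` -/

def Hm (D : ℕ) : Matrix (Vtx D) (Vtx D) ℂ :=
  fun y s => ∏ k : Fin D, (if y k && s k then (-1 : ℂ) else 1)

lemma adj_flip_sum (y z : Vtx D) :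
    adjMat D y z = ∑ k : Fin D, if z = Function.update y k (!(y k)) then 1 else 0 := by
  classical
  rw [show (∑ k : Fin D, if z = Function.update y k (!(y k)) then (1:ℂ) else 0)
      = ((Finset.univ.filter fun k : Fin D => z = Function.update y k (!(y k))).card : ℂ) from by
    rw [Finset.card_filter]; push_cast; rfl]
  unfold adjMat
  by_cases h : (Finset.univ.filter fun k => y k ≠ z k).card = 1
  · rw [if_pos h]
    obtain ⟨k₀, hk₀, hm⟩ := unique_diff h
    have : (Finset.univ.filter fun k : Fin D => z = Function.update y k (!(y k))) = {k₀} := by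
      ext k
      simp only [Finset.mem_filter, Finset.mem_univ, true_and, Finset.mem_singleton]
      constructor
      · intro hz
        by_contra hne
        have := congrFun hz k₀
        rw [Function.update_of_ne (Ne.symm hne)] at this
        exact hk₀ this.symm
      · rintro rfl
        funext m
        by_cases hmk : m = k
        · subst hmk
          rw [Function.update_self]
          cases hy : y m <;> cases hz : z m <;> simp_all
        · rw [Function.update_of_ne hmk, hm m hmk]
    rw [this]; simp
  · rw [if_neg h]
    have : (Finset.univ.filter fun k : Fin D => z = Function.update y k (!(y k))) = ∅ := by
      ext k
      simp only [Finset.mem_filter, Finset.mem_univ, true_and, Finset.notMem_empty,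
        iff_false]
      intro hz
      apply h
      have : (Finset.univ.filter fun m => y m ≠ z m) = {k} := by
        ext m
        simp only [Finset.mem_filter, Finset.mem_univ, true_and, Finset.mem_singleton]
        constructor
        · intro hne
          by_contra hmk
          rw [hz, Function.update_of_ne hmk] at hne
          exact hne rfl
        · rintro rfl
          rw [hz, Function.update_self]
          cases y m <;> simp
      rw [this]; simp
    rw [this]; simp

lemma Hm_flip (y s : Vtx D) (k : Fin D) :
    Hm D (Function.update y k (!(y k))) s = Hm D y s * (if s k then -1 else 1) := by
  classical
  unfold Hm
  rw [← Finset.prod_erase_mul _ _ (Finset.mem_univ k),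
      ← Finset.prod_erase_mul _ _ (Finset.mem_univ k)]
  have h1 : ∀ m ∈ Finset.univ.erase k,
      (if Function.update y k (!(y k)) m && s m then (-1:ℂ) else 1)
        = (if y m && s m then (-1:ℂ) else 1) := by
    intro m hm
    rw [Function.update_of_ne (Finset.mem_erase.mp hm).1]
  rw [Finset.prod_congr rfl h1, Function.update_self]
  have : (if !y k && s k then (-1:ℂ) else 1)
      = (if y k && s k then (-1:ℂ) else 1) * (if s k then -1 else 1) := by
    cases y k <;> cases s k <;> simp
  rw [this]; ring

lemma sum_pm (s : Vtx D) :
    (∑ k : Fin D, (if s k then (-1 : ℂ) else 1)) = theta D (wt s) := by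
  classical
  rw [Finset.sum_ite (f := fun _ => (-1:ℂ)) (g := fun _ => (1:ℂ))]
  simp only [Finset.sum_const, smul_eq_mul, mul_one, mul_neg_one]
  have h1 : (Finset.univ.filter fun k => s k).card = wt s := rfl
  have h2 : (Finset.univ.filter fun k => ¬ s k).card = D - wt s := by
    have := Finset.card_filter_add_card_filter_not
      (s := (Finset.univ : Finset (Fin D))) (p := fun k => s k)
    simp only [Finset.card_univ, Fintype.card_fin] at this
    have hws : (Finset.univ.filter fun k => s k).card = wt s := rfl
    omega
  rw [h1, h2, theta]
  have := wt_le s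
  simp only [nsmul_eq_mul, mul_one, mul_neg_one]
  rw [Nat.cast_sub this]
  ring

lemma AH : adjMat D * Hm D = Hm D * Matrix.diagonal (fun s => theta D (wt s)) := by
  classical
  funext y s
  rw [Matrix.mul_apply, Matrix.mul_diagonal]
  calc ∑ z, adjMat D y z * Hm D z s
      = ∑ z, ∑ k : Fin D, (if z = Function.update y k (!(y k)) then (1:ℂ) else 0) * Hm D z s := by
        apply Finset.sum_congr rfl; intro z _
        rw [adj_flip_sum, Finset.sum_mul]
    _ = ∑ k : Fin D, ∑ z, (if z = Function.update y k (!(y k)) then (1:ℂ) else 0) * Hm D z s := by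
        rw [Finset.sum_comm]
    _ = ∑ k : Fin D, Hm D (Function.update y k (!(y k))) s := by
        apply Finset.sum_congr rfl; intro k _
        rw [Finset.sum_eq_single (Function.update y k (!(y k)))]
        · rw [if_pos rfl, one_mul]
        · intro z _ hz; rw [if_neg hz, zero_mul]
        · intro h; exact absurd (Finset.mem_univ _) h
    _ = ∑ k : Fin D, Hm D y s * (if s k then -1 else 1) := by
        apply Finset.sum_congr rfl; intro k _; rw [Hm_flip]
    _ = Hm D y s * theta D (wt s) := by
        rw [← Finset.mul_sum, sum_pm]

lemma HH : Hm D * Hm D = ((2:ℂ) ^ D) • (1 : Matrix (Vtx D) (Vtx D) ℂ) := by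
  classical
  funext y z
  rw [Matrix.mul_apply]
  calc ∑ s, Hm D y s * Hm D s z
      = ∑ s : Vtx D, ∏ k : Fin D,
          ((if y k && s k then (-1:ℂ) else 1) * (if s k && z k then (-1:ℂ) else 1)) := by
        apply Finset.sum_congr rfl; intro s _
        rw [Hm, Hm, ← Finset.prod_mul_distrib]
    _ = ∏ k : Fin D, ∑ b : Bool,
          ((if y k && b then (-1:ℂ) else 1) * (if b && z k then (-1:ℂ) else 1)) := by
        rw [← Fintype.piFinset_univ, Finset.sum_prod_piFinset univ
          (fun k b => (if y k && b then (-1:ℂ) else 1) * (if b && z k then (-1:ℂ) else 1))]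
    _ = ∏ k : Fin D, (if y k = z k then (2:ℂ) else 0) := by
        apply Finset.prod_congr rfl; intro k _
        cases hy : y k <;> cases hz : z k <;> simp <;> norm_num
    _ = ((2:ℂ) ^ D) • (1 : Matrix (Vtx D) (Vtx D) ℂ) y z := by
        by_cases hyz : y = z
        · subst hyz
          simp [Matrix.one_apply_eq]
        · obtain ⟨k, hk⟩ : ∃ k, y k ≠ z k := by
            by_contra hc
            push_neg at hc
            exact hyz (funext hc)
          rw [Finset.prod_eq_zero (Finset.mem_univ k) (by rw [if_neg hk])]
          simp [Matrix.one_apply_ne hyz, hyz]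

lemma pow_adj_mul_H (n : ℕ) :
    adjMat D ^ n * Hm D = Hm D * (Matrix.diagonal (fun s : Vtx D => theta D (wt s))) ^ n := by
  induction n with
  | zero => simp
  | succ n ih =>
      rw [pow_succ, pow_succ, mul_assoc, ← mul_assoc (Hm D), ← ih, mul_assoc, AH,
        ← mul_assoc]

lemma aeval_adj_mul_H (p : Polynomial ℂ) :
    (Polynomial.aeval (adjMat D) p) * Hm D
      = Hm D * Polynomial.aeval (Matrix.diagonal (fun s => theta D (wt s))) p := by
  induction p using Polynomial.induction_on' with
  | add p q hp hq => rw [map_add, map_add, add_mul, mul_add, hp, hq]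
  | monomial n a =>
      simp only [Polynomial.aeval_monomial, Algebra.algebraMap_eq_smul_one, smul_mul_assoc,
        one_mul, Matrix.mul_smul]
      rw [pow_adj_mul_H]

lemma min_poly_adj :
    Polynomial.aeval (adjMat D)
      (∏ j ∈ Finset.range (D + 1), (Polynomial.X - Polynomial.C (theta D j))) = 0 := by
  classical
  set Φ := ∏ j ∈ Finset.range (D + 1), (Polynomial.X - Polynomial.C (theta D j)) with hΦ
  have hdiag : Polynomial.aeval (Matrix.diagonal (fun s : Vtx D => theta D (wt s))) Φ = 0 := by
    rw [aeval_diagonal]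
    have : ∀ s : Vtx D, Polynomial.eval (theta D (wt s)) Φ = 0 := by
      intro s
      rw [hΦ, Polynomial.eval_prod]
      apply Finset.prod_eq_zero (i := wt s)
      · exact Finset.mem_range.mpr (Nat.lt_succ_of_le (wt_le s))
      · simp
    rw [show (fun y : Vtx D => Polynomial.eval (theta D (wt y)) Φ) = (fun _ => (0:ℂ)) from
      funext this, Matrix.diagonal_zero]
  have h1 : Polynomial.aeval (adjMat D) Φ * Hm D = 0 := by
    rw [aeval_adj_mul_H, hdiag, mul_zero]
  have h2 : Polynomial.aeval (adjMat D) Φ * (Hm D * Hm D) = 0 := by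
    rw [← mul_assoc, h1, zero_mul]
  rw [HH, Matrix.mul_smul, mul_one] at h2
  have h3 : ((2:ℂ) ^ D)⁻¹ • (((2:ℂ) ^ D) • Polynomial.aeval (adjMat D) Φ) = 0 := by
    rw [h2, smul_zero]
  rwa [smul_smul, inv_mul_cancel₀ (pow_ne_zero D (two_ne_zero)), one_smul] at h3

lemma Emat_eigen {r : ℕ} (hr : r ≤ D) (w : Vtx D → ℂ) :
    (adjMat D).mulVec ((Emat D r).mulVec w) = theta D r • (Emat D r).mulVec w := by
  classical
  have key : adjMat D * Emat D r = theta D r • Emat D r := by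
    have heq : (Polynomial.X - Polynomial.C (theta D r)) *
        (∏ j ∈ (Finset.range (D + 1)).erase r,
          Polynomial.C ((theta D r - theta D j)⁻¹) * (Polynomial.X - Polynomial.C (theta D j)))
        = Polynomial.C (∏ j ∈ (Finset.range (D + 1)).erase r, (theta D r - theta D j)⁻¹) *
          ∏ j ∈ Finset.range (D + 1), (Polynomial.X - Polynomial.C (theta D j)) := by
      rw [Finset.prod_mul_distrib, ← map_prod]
      rw [← Finset.mul_prod_erase (Finset.range (D+1))
        (fun j => Polynomial.X - Polynomial.C (theta D j))
        (Finset.mem_range.mpr (Nat.lt_succ_of_le hr))]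
      ring
    have h0 : Polynomial.aeval (adjMat D)
        ((Polynomial.X - Polynomial.C (theta D r)) *
          (∏ j ∈ (Finset.range (D + 1)).erase r,
            Polynomial.C ((theta D r - theta D j)⁻¹)
              * (Polynomial.X - Polynomial.C (theta D j)))) = 0 := by
      rw [heq, _root_.map_mul, min_poly_adj, mul_zero]
    rw [_root_.map_mul] at h0
    have hX : Polynomial.aeval (adjMat D) (Polynomial.X - Polynomial.C (theta D r))
        = adjMat D - theta D r • 1 := by
      rw [map_sub, Polynomial.aeval_X, Polynomial.aeval_C, Algebra.algebraMap_eq_smul_one]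
    rw [hX] at h0
    unfold Emat
    rw [sub_mul, Matrix.smul_mul, one_mul] at h0
    rw [sub_eq_zero] at h0
    exact h0
  rw [Matrix.mulVec_mulVec, key, Matrix.smul_mulVec]

/-! ### inner product lemmas -/

lemma inp_self_eq (v : Vtx D → ℂ) :
    inp v v = ((∑ y, Complex.normSq (v y) : ℝ) : ℂ) := by
  unfold inp
  push_cast
  apply Finset.sum_congr rfl
  intro y _
  rw [Complex.mul_conj]

lemma inp_self_nonneg (v : Vtx D → ℂ) : 0 ≤ ∑ y, Complex.normSq (v y) :=
  Finset.sum_nonneg fun y _ => Complex.normSq_nonneg (v y)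

lemma inp_self_eq_zero {v : Vtx D → ℂ} : inp v v = 0 ↔ v = 0 := by
  rw [inp_self_eq]
  rw [Complex.ofReal_eq_zero]
  constructor
  · intro h
    funext y
    have := (Finset.sum_eq_zero_iff_of_nonneg
      (fun y _ => Complex.normSq_nonneg (v y))).mp h y (Finset.mem_univ y)
    simpa [Complex.normSq_eq_zero] using this
  · rintro rfl; simp

lemma inp_smul_right (c : ℂ) (u v : Vtx D → ℂ) :
    inp u (c • v) = (starRingEnd ℂ) c * inp u v := by
  unfold inp
  rw [Finset.mul_sum]
  apply Finset.sum_congr rfl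
  intro y _
  simp only [Pi.smul_apply, smul_eq_mul, _root_.map_mul]
  ring

lemma inp_Rm_adjoint (a b : Vtx D → ℂ) :
    inp ((Rm D).mulVec a) b = inp a ((Lm D).mulVec b) := by
  unfold inp
  simp only [Matrix.mulVec, dotProduct, map_sum, _root_.map_mul, Finset.sum_mul,
    Finset.mul_sum]
  rw [Finset.sum_comm]
  apply Finset.sum_congr rfl
  intro z _
  apply Finset.sum_congr rfl
  intro y _
  rw [Rm_eq_transpose, Matrix.transpose_apply, Lm_real]
  ring

/-! ### closure of T-modules under the various operators -/

lemma TMod_Lm {W : Submodule ℂ (Vtx D → ℂ)} (hW : IsTMod D W) {w : Vtx D → ℂ} (hw : w ∈ W) :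
    (Lm D).mulVec w ∈ W := by
  rw [Lm_decomp, Matrix.sub_mulVec, Matrix.smul_mulVec, Matrix.smul_mulVec,
    Matrix.sub_mulVec, ← Matrix.mulVec_mulVec, ← Matrix.mulVec_mulVec]
  exact sub_mem (Submodule.smul_mem _ _ (hW.1 w hw))
    (Submodule.smul_mem _ _ (sub_mem (hW.1 _ (hW.2 w hw)) (hW.2 _ (hW.1 w hw))))

lemma TMod_Rm {W : Submodule ℂ (Vtx D → ℂ)} (hW : IsTMod D W) {w : Vtx D → ℂ} (hw : w ∈ W) :
    (Rm D).mulVec w ∈ W := by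
  rw [Rm_decomp, Matrix.add_mulVec, Matrix.smul_mulVec, Matrix.smul_mulVec,
    Matrix.sub_mulVec, ← Matrix.mulVec_mulVec, ← Matrix.mulVec_mulVec]
  exact add_mem (Submodule.smul_mem _ _ (hW.1 w hw))
    (Submodule.smul_mem _ _ (sub_mem (hW.1 _ (hW.2 w hw)) (hW.2 _ (hW.1 w hw))))

lemma TMod_Estar {W : Submodule ℂ (Vtx D → ℂ)} (hW : IsTMod D W) {i : ℕ} (hi : i ≤ D)
    {w : Vtx D → ℂ} (hw : w ∈ W) : (EstarMat D i).mulVec w ∈ W := by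
  rw [Estar_eq_poly hi]
  exact aeval_mulVec_mem hW.2 _ hw

lemma TMod_Emat {W : Submodule ℂ (Vtx D → ℂ)} (hW : IsTMod D W) {i : ℕ}
    {w : Vtx D → ℂ} (hw : w ∈ W) : (Emat D i).mulVec w ∈ W := by
  unfold Emat
  exact aeval_mulVec_mem hW.1 _ hw

/-- a vector supported on level `k` is an eigenvector of `A*` -/
lemma dual_level {k : ℕ} {w : Vtx D → ℂ} (h : (EstarMat D k).mulVec w = w) :
    (dualAdjMat D).mulVec w = ((D : ℂ) - 2 * k) • w := by
  have hw : ∀ y, wt y ≠ k → w y = 0 := by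
    intro y hy
    have := congrFun h y
    rw [EstarMat] at this
    rw [Matrix.mulVec_diagonal] at this
    rw [if_neg hy, zero_mul] at this
    exact this.symm
  funext y
  rw [dualAdjMat, Matrix.mulVec_diagonal, Pi.smul_apply, smul_eq_mul]
  by_cases hy : wt y = k
  · rw [hy]
  · rw [hw y hy]; ring

/-! ### the cyclic vectors -/

def vseq (D : ℕ) (v0 : Vtx D → ℂ) : ℕ → (Vtx D → ℂ)
  | 0 => v0
  | j+1 => ((j : ℂ) + 1)⁻¹ • (Rm D).mulVec (vseq D v0 j)

lemma vseq_zero (v0 : Vtx D → ℂ) : vseq D v0 0 = v0 := rfl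
lemma vseq_succ (v0 : Vtx D → ℂ) (j : ℕ) :
    vseq D v0 (j+1) = ((j : ℂ) + 1)⁻¹ • (Rm D).mulVec (vseq D v0 j) := rfl

lemma Rm_vseq (v0 : Vtx D → ℂ) (j : ℕ) :
    (Rm D).mulVec (vseq D v0 j) = ((j : ℂ) + 1) • vseq D v0 (j+1) := by
  rw [vseq_succ, smul_smul, mul_inv_cancel₀ (Nat.cast_add_one_ne_zero j), one_smul]

section Build

variable {W : Submodule ℂ (Vtx D → ℂ)} {m : ℕ} {v0 : Vtx D → ℂ}

lemma vseq_supp (hsupp : (EstarMat D m).mulVec v0 = v0) (j : ℕ) :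
    (EstarMat D (m + j)).mulVec (vseq D v0 j) = vseq D v0 j := by
  induction j with
  | zero => simpa [vseq_zero] using hsupp
  | succ j ih =>
      rw [vseq_succ, Matrix.mulVec_smul]
      congr 1
      rw [Matrix.mulVec_mulVec, show m + (j+1) = (m+j) + 1 from rfl, Estar_Rm (m+j),
        ← Matrix.mulVec_mulVec, ih]

lemma vseq_L (hsupp : (EstarMat D m).mulVec v0 = v0) (hL : (Lm D).mulVec v0 = 0) (j : ℕ) :
    (Lm D).mulVec (vseq D v0 (j+1)) = (((D : ℂ) - 2 * m) - j) • vseq D v0 j := by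
  have key : ∀ i, (Lm D).mulVec ((Rm D).mulVec (vseq D v0 i))
      = (Rm D).mulVec ((Lm D).mulVec (vseq D v0 i))
        + ((D : ℂ) - 2 * ((m + i : ℕ) : ℂ)) • vseq D v0 i := by
    intro i
    have hc : Lm D * Rm D = Rm D * Lm D + dualAdjMat D := by
      rw [← comm_LR]; abel
    rw [Matrix.mulVec_mulVec, hc, Matrix.add_mulVec, ← Matrix.mulVec_mulVec,
      dual_level (vseq_supp hsupp i)]
  induction j with
  | zero =>
      rw [vseq_succ, Matrix.mulVec_smul, key 0, vseq_zero, hL, Matrix.mulVec_zero, zero_add,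
        smul_smul]
      congr 1
      push_cast
      norm_num
  | succ j ih =>
      rw [vseq_succ, Matrix.mulVec_smul, key (j+1), ih]
      rw [Matrix.mulVec_smul, Rm_vseq]
      rw [smul_smul, ← add_smul, smul_smul]
      congr 1
      have hne : ((j:ℂ) + 1) + 1 ≠ 0 := by
        have := Nat.cast_add_one_ne_zero (R := ℂ) (j+1)
        push_cast at this
        exact this
      push_cast
      field_simp
      ring

lemma vseq_mem (hW : IsTMod D W) (hv0 : v0 ∈ W) (j : ℕ) : vseq D v0 j ∈ W := by
  induction j with
  | zero => exact hv0
  | succ j ih => exact Submodule.smul_mem _ _ (TMod_Rm hW ih)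

lemma span_vseq_tmod (hsupp : (EstarMat D m).mulVec v0 = v0) (hL : (Lm D).mulVec v0 = 0) :
    IsTMod D (Submodule.span ℂ (Set.range (vseq D v0))) := by
  have hRmem : ∀ j, (Rm D).mulVec (vseq D v0 j) ∈ Submodule.span ℂ (Set.range (vseq D v0)) := by
    intro j
    rw [Rm_vseq]
    exact Submodule.smul_mem _ _ (Submodule.subset_span ⟨j+1, rfl⟩)
  have hLmem : ∀ j, (Lm D).mulVec (vseq D v0 j) ∈ Submodule.span ℂ (Set.range (vseq D v0)) := by
    intro j
    match j with
    | 0 => rw [vseq_zero, hL]; exact Submodule.zero_mem _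
    | j+1 =>
        rw [vseq_L hsupp hL j]
        exact Submodule.smul_mem _ _ (Submodule.subset_span ⟨j, rfl⟩)
  constructor
  · intro w hw
    induction hw using Submodule.span_induction with
    | mem x hx =>
        obtain ⟨j, rfl⟩ := hx
        rw [adj_decomp, Matrix.add_mulVec]
        exact add_mem (hLmem j) (hRmem j)
    | zero => rw [Matrix.mulVec_zero]; exact Submodule.zero_mem _
    | add x y _ _ hx hy => rw [Matrix.mulVec_add]; exact add_mem hx hy
    | smul c x _ hx => rw [Matrix.mulVec_smul]; exact Submodule.smul_mem _ _ hx
  · intro w hw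
    induction hw using Submodule.span_induction with
    | mem x hx =>
        obtain ⟨j, rfl⟩ := hx
        rw [dual_level (vseq_supp hsupp j)]
        exact Submodule.smul_mem _ _ (Submodule.subset_span ⟨j, rfl⟩)
    | zero => rw [Matrix.mulVec_zero]; exact Submodule.zero_mem _
    | add x y _ _ hx hy => rw [Matrix.mulVec_add]; exact add_mem hx hy
    | smul c x _ hx => rw [Matrix.mulVec_smul]; exact Submodule.smul_mem _ _ hx

lemma span_vseq_eq (hW : IsIrredTMod D W) (hv0 : v0 ∈ W) (hv0ne : v0 ≠ 0)
    (hsupp : (EstarMat D m).mulVec v0 = v0) (hL : (Lm D).mulVec v0 = 0) :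
    Submodule.span ℂ (Set.range (vseq D v0)) = W := by
  have hle : Submodule.span ℂ (Set.range (vseq D v0)) ≤ W := by
    rw [Submodule.span_le]
    rintro x ⟨j, rfl⟩
    exact vseq_mem hW.1 hv0 j
  rcases hW.2.2 _ (span_vseq_tmod hsupp hL) hle with hbot | heq
  · exfalso
    apply hv0ne
    have : v0 ∈ Submodule.span ℂ (Set.range (vseq D v0)) :=
      Submodule.subset_span ⟨0, rfl⟩
    rw [hbot] at this
    simpa using this
  · exact heq

end Build

lemma Estar_idem (i : ℕ) : EstarMat D i * EstarMat D i = EstarMat D i := by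
  rw [EstarMat, Matrix.diagonal_mul_diagonal]
  funext y z
  rw [Matrix.diagonal_apply, Matrix.diagonal_apply]
  by_cases hyz : y = z
  · rw [if_pos hyz, if_pos hyz]
    by_cases h : wt y = i
    · rw [if_pos h, mul_one]
    · rw [if_neg h, mul_zero]
  · rw [if_neg hyz, if_neg hyz]

lemma Estar_zero_of_gt {i : ℕ} (h : D < i) : EstarMat D i = (0 : Matrix (Vtx D) (Vtx D) ℂ) := by
  unfold EstarMat
  rw [show (fun y : Vtx D => if wt y = i then (1:ℂ) else 0) = fun _ => (0:ℂ) from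
    funext fun y => if_neg (by have := wt_le y; omega), Matrix.diagonal_zero]

lemma sum_mulVec {s : Finset ℕ} (M : ℕ → Matrix (Vtx D) (Vtx D) ℂ) (v : Vtx D → ℂ) :
    (∑ i ∈ s, M i).mulVec v = ∑ i ∈ s, (M i).mulVec v := by
  classical
  induction s using Finset.cons_induction with
  | empty => simp [Matrix.zero_mulVec]
  | cons a s ha ih => rw [Finset.sum_cons, Finset.sum_cons, Matrix.add_mulVec, ih]

lemma smul_cancel {v : Vtx D → ℂ} (hv : v ≠ 0) {c c' : ℂ} (h : c • v = c' • v) : c = c' := by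
  have : (c - c') • v = 0 := by rw [sub_smul, h, sub_self]
  rcases smul_eq_zero.mp this with h1 | h1
  · exact sub_eq_zero.mp h1
  · exact absurd h1 hv

end HC

open HC

/-- `Aᵉ` acts on the basis `E*_r u, ..., E*_{r+d} u` by
`Aᵉ(E*_{r+j} u) = i(d-j+1)·E*_{r+j-1} u - i(j+1)·E*_{r+j+1} u` (terms with index `r-1` or
`r+d+1` interpreted as `0`). -/
theorem imagAdjMat_action_on_Estar_basis (D : ℕ) (hD : 0 < D)
    (W : Submodule ℂ (Vtx D → ℂ)) (hW : IsIrredTMod D W) (r : ℕ)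
    (hr : IsLeast {i | Submodule.map (EstarMat D i).mulVecLin W ≠ ⊥} r)
    (d : ℕ) (hd : d = D - 2 * r)
    (u : Vtx D → ℂ) (hu : u ∈ Submodule.map (Emat D r).mulVecLin W) (hu0 : u ≠ 0)
    (j : ℕ) (hj : j ≤ d) :
    (imagAdjMat D).mulVec ((EstarMat D (r + j)).mulVec u) =
      (if j = 0 then 0 else
        (Complex.I * ((d : ℂ) - (j : ℂ) + 1)) • (EstarMat D (r + j - 1)).mulVec u)
      + (if j = d then 0 else
        (-(Complex.I * ((j : ℂ) + 1))) • (EstarMat D (r + j + 1)).mulVec u) := by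
  classical
  obtain ⟨hWT, hWne, hWirr⟩ := hW
  obtain ⟨w0, hw0W, hw0u⟩ := hu
  rw [Matrix.mulVecLin_apply] at hw0u
  have huW : u ∈ W := hw0u ▸ TMod_Emat hWT hw0W
  have hlow : ∀ i, i < r → ∀ w ∈ W, (EstarMat D i).mulVec w = 0 := by
    intro i hi w hw
    by_contra hne
    have hmem : Submodule.map (EstarMat D i).mulVecLin W ≠ ⊥ := by
      intro hb
      have h2 : (EstarMat D i).mulVecLin w ∈ Submodule.map (EstarMat D i).mulVecLin W :=
        Submodule.mem_map_of_mem hw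
      rw [hb, Submodule.mem_bot, Matrix.mulVecLin_apply] at h2
      exact hne h2
    exact absurd (hr.2 hmem) (by omega)
  have hrD : r ≤ D := by
    by_contra hgt
    push_neg at hgt
    apply hr.1
    rw [Submodule.eq_bot_iff]
    rintro x ⟨w, hw, rfl⟩
    rw [Matrix.mulVecLin_apply, Estar_zero_of_gt hgt, Matrix.zero_mulVec]
  have hAu : (adjMat D).mulVec u = theta D r • u := by
    rw [← hw0u]; exact Emat_eigen hrD w0
  have hsum : ∑ i ∈ Finset.range (D+1), (EstarMat D i).mulVec u = u := by
    rw [← sum_mulVec, sum_Estar, Matrix.one_mulVec]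
  have hulevel : ∀ t, 0 < t → (∀ i, i < t → (EstarMat D i).mulVec u = 0) →
      (Lm D).mulVec ((EstarMat D t).mulVec u) = 0 := by
    intro t ht hmin
    obtain ⟨s, rfl⟩ : ∃ s, t = s + 1 := ⟨t - 1, by omega⟩
    have h1 : (Lm D).mulVec ((EstarMat D (s+1)).mulVec u)
        = (EstarMat D s).mulVec ((Lm D).mulVec u) := by
      rw [Matrix.mulVec_mulVec, Matrix.mulVec_mulVec, ← Estar_Lm s]
    have hLu : (Lm D).mulVec u = (adjMat D).mulVec u - (Rm D).mulVec u := by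
      rw [adj_decomp, Matrix.add_mulVec]; abel
    rw [h1, hLu, Matrix.mulVec_sub, hAu, Matrix.mulVec_smul, hmin s (by omega), smul_zero,
      Matrix.mulVec_mulVec]
    cases s with
    | zero => rw [Estar0_Rm, Matrix.zero_mulVec]; simp
    | succ s' =>
        rw [Estar_Rm s', ← Matrix.mulVec_mulVec, hmin s' (by omega), Matrix.mulVec_zero]
        simp
  set v0 : Vtx D → ℂ := (EstarMat D r).mulVec u with hv0def
  have hsupp : (EstarMat D r).mulVec v0 = v0 := by
    rw [hv0def, Matrix.mulVec_mulVec, Estar_idem]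
  have hL0 : (Lm D).mulVec v0 = 0 := by
    rcases Nat.eq_zero_or_pos r with hr0 | hrpos
    · rw [hv0def, hr0, Matrix.mulVec_mulVec, Lm_Estar0, Matrix.zero_mulVec]
    · exact hulevel r hrpos (fun i hi => hlow i hi u huW)
  have hv0ne : v0 ≠ 0 := by
    by_contra h0
    have hex : ∃ t, (EstarMat D t).mulVec u ≠ 0 := by
      by_contra hall
      push_neg at hall
      apply hu0
      rw [← hsum]
      exact Finset.sum_eq_zero fun i _ => hall i
    have htne := Nat.find_spec hex
    set t := Nat.find hex with htdef
    have htmin : ∀ i, i < t → (EstarMat D i).mulVec u = 0 := by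
      intro i hi
      by_contra hne
      exact Nat.find_min hex hi hne
    have htr : r < t := by
      rcases lt_trichotomy t r with hh | hh | hh
      · exact absurd (hlow t hh u huW) htne
      · exact absurd (hh ▸ h0) htne
      · exact hh
    have htD : t ≤ D := by
      by_contra hgt
      push_neg at hgt
      exact htne (by rw [Estar_zero_of_gt hgt, Matrix.zero_mulVec])
    have hsuppt : (EstarMat D t).mulVec ((EstarMat D t).mulVec u) = (EstarMat D t).mulVec u := by
      rw [Matrix.mulVec_mulVec, Estar_idem]
    have hLt := hulevel t (by omega) htmin
    have hmemt : (EstarMat D t).mulVec u ∈ W := TMod_Estar hWT htD huW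
    have hWeq := span_vseq_eq ⟨hWT, hWne, hWirr⟩ hmemt htne hsuppt hLt
    apply hr.1
    rw [Submodule.eq_bot_iff]
    rintro x ⟨w, hw, rfl⟩
    rw [Matrix.mulVecLin_apply]
    rw [← hWeq] at hw
    induction hw using Submodule.span_induction with
    | mem x hx =>
        obtain ⟨k, rfl⟩ := hx
        rw [← vseq_supp hsuppt k, Matrix.mulVec_mulVec, Estar_mul_Estar (by omega),
          Matrix.zero_mulVec]
    | zero => exact Matrix.mulVec_zero _
    | add x y _ _ hx hy => rw [Matrix.mulVec_add, hx, hy, add_zero]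
    | smul c x _ hx => rw [Matrix.mulVec_smul, hx, smul_zero]
  have hv0W : v0 ∈ W := TMod_Estar hWT hrD huW
  have hmain := span_vseq_eq ⟨hWT, hWne, hWirr⟩ hv0W hv0ne hsupp hL0
  have hRv0 : (Lm D).mulVec ((Rm D).mulVec v0) = ((D:ℂ) - 2*(r:ℂ)) • v0 := by
    rw [show (Rm D).mulVec v0 = (Rm D).mulVec (vseq D v0 0) from rfl, Rm_vseq,
      Matrix.mulVec_smul, vseq_L hsupp hL0 0, smul_smul]
    congr 1
    push_cast
    ring
  have h2r : 2*r ≤ D := by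
    by_contra hgt
    push_neg at hgt
    have h1 : inp ((Rm D).mulVec v0) ((Rm D).mulVec v0) = ((D:ℂ) - 2*(r:ℂ)) * inp v0 v0 := by
      rw [inp_Rm_adjoint, hRv0, inp_smul_right]
      congr 1
      rw [show ((D:ℂ) - 2*(r:ℂ)) = (((D:ℝ) - 2*(r:ℝ) : ℝ) : ℂ) from by push_cast; ring,
        Complex.conj_ofReal]
    rw [inp_self_eq, inp_self_eq] at h1
    have h2 : ((∑ y, Complex.normSq ((Rm D).mulVec v0 y) : ℝ) : ℂ)
        = ((((D:ℝ) - 2*(r:ℝ)) * (∑ y, Complex.normSq (v0 y)) : ℝ) : ℂ) := by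
      exact_mod_cast h1
    have h3 := Complex.ofReal_inj.mp h2
    have hb0 : 0 < ∑ y, Complex.normSq (v0 y) := by
      rcases lt_or_eq_of_le (inp_self_nonneg v0) with h | h
      · exact h
      · exfalso
        apply hv0ne
        apply inp_self_eq_zero.mp
        rw [inp_self_eq, ← h, Complex.ofReal_zero]
    have ha0 := inp_self_nonneg ((Rm D).mulVec v0)
    have hDr : (D:ℝ) < 2*(r:ℝ) := by exact_mod_cast hgt
    nlinarith
  have hdc : (d:ℂ) = (D:ℂ) - 2*(r:ℂ) := by
    rw [hd, Nat.cast_sub h2r]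
    push_cast
    ring
  have hLv : ∀ k, (Lm D).mulVec (vseq D v0 (k+1)) = ((d:ℂ) - (k:ℂ)) • vseq D v0 k := by
    intro k
    rw [vseq_L hsupp hL0 k, hdc]
  have hRnorm : ∀ k, inp ((Rm D).mulVec (vseq D v0 k)) ((Rm D).mulVec (vseq D v0 k))
      = (((k:ℂ)+1) * ((d:ℂ) - (k:ℂ))) * inp (vseq D v0 k) (vseq D v0 k) := by
    intro k
    rw [inp_Rm_adjoint, Rm_vseq, Matrix.mulVec_smul, hLv k, inp_smul_right, inp_smul_right,
      ← mul_assoc]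
    congr 1
    simp
  have hvne : ∀ k, k ≤ d → vseq D v0 k ≠ 0 := by
    intro k
    induction k with
    | zero => intro _; exact hv0ne
    | succ k ih =>
        intro hk
        have hvk := ih (by omega)
        have hcne : (((k:ℂ)+1) * ((d:ℂ) - (k:ℂ))) ≠ 0 := by
          apply mul_ne_zero (Nat.cast_add_one_ne_zero k)
          apply sub_ne_zero.mpr
          intro hc
          have : d = k := Nat.cast_injective hc
          omega
        have hinp : inp ((Rm D).mulVec (vseq D v0 k)) ((Rm D).mulVec (vseq D v0 k)) ≠ 0 := by
          rw [hRnorm k]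
          exact mul_ne_zero hcne (fun hc => hvk (inp_self_eq_zero.mp hc))
        have hRne : (Rm D).mulVec (vseq D v0 k) ≠ 0 := by
          intro hc
          apply hinp
          rw [hc]
          exact inp_self_eq_zero.mpr rfl
        rw [vseq_succ]
        exact smul_ne_zero (inv_ne_zero (Nat.cast_add_one_ne_zero k)) hRne
  have hzero : ∀ k, d < k → vseq D v0 k = 0 := by
    have hd1 : vseq D v0 (d+1) = 0 := by
      have h1 : inp ((Rm D).mulVec (vseq D v0 d)) ((Rm D).mulVec (vseq D v0 d)) = 0 := by
        rw [hRnorm d, sub_self, mul_zero, zero_mul]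
      have h2 : (Rm D).mulVec (vseq D v0 d) = 0 := inp_self_eq_zero.mp h1
      rw [vseq_succ, h2, smul_zero]
    intro k
    induction k with
    | zero => omega
    | succ k ih =>
        intro hk
        rcases Nat.lt_or_ge d k with h | h
        · rw [vseq_succ, ih h, Matrix.mulVec_zero, smul_zero]
        · have hkd : k = d := by omega
          rw [hkd]
          exact hd1
  have hgen : ∀ x ∈ Submodule.span ℂ (Set.range (vseq D v0)),
      ∀ k, ∃ c : ℂ, (EstarMat D (r+k)).mulVec x = c • vseq D v0 k := by
    intro x hx
    induction hx using Submodule.span_induction with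
    | mem x hx =>
        obtain ⟨i, rfl⟩ := hx
        intro k
        by_cases hik : i = k
        · subst hik
          exact ⟨1, by rw [one_smul]; exact vseq_supp hsupp i⟩
        · refine ⟨0, ?_⟩
          rw [zero_smul, ← vseq_supp hsupp i, Matrix.mulVec_mulVec,
            Estar_mul_Estar (by omega), Matrix.zero_mulVec]
    | zero => intro k; exact ⟨0, by rw [Matrix.mulVec_zero, zero_smul]⟩
    | add x y _ _ ihx ihy =>
        intro k
        obtain ⟨c1, hc1⟩ := ihx k
        obtain ⟨c2, hc2⟩ := ihy k
        exact ⟨c1 + c2, by rw [Matrix.mulVec_add, hc1, hc2, add_smul]⟩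
    | smul a x _ ihx =>
        intro k
        obtain ⟨c, hc⟩ := ihx k
        exact ⟨a * c, by rw [Matrix.mulVec_smul, hc, smul_smul]⟩
  choose β hβ using hgen u (by rw [hmain]; exact huW)
  have hrec : ∀ k, k ≤ d →
      (d:ℂ) * β k = β (k+1) * ((d:ℂ) - (k:ℂ)) + (if k = 0 then 0 else β (k-1) * (k:ℂ)) := by
    intro k hk
    have lhs1 : (EstarMat D (r+k)).mulVec ((adjMat D).mulVec u)
        = ((d:ℂ) * β k) • vseq D v0 k := by
      rw [hAu, Matrix.mulVec_smul, hβ k, smul_smul]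
      congr 1
      rw [theta, ← hdc]
    have t1 : (EstarMat D (r+k)).mulVec ((Lm D).mulVec u)
        = (β (k+1) * ((d:ℂ) - (k:ℂ))) • vseq D v0 k := by
      rw [Matrix.mulVec_mulVec, Estar_Lm (r+k), ← Matrix.mulVec_mulVec,
        show r+k+1 = r+(k+1) from rfl, hβ (k+1), Matrix.mulVec_smul, hLv k, smul_smul]
    have t2 : (EstarMat D (r+k)).mulVec ((Rm D).mulVec u)
        = (if k = 0 then 0 else β (k-1) * (k:ℂ)) • vseq D v0 k := by
      by_cases hk0 : k = 0
      · rw [hk0, if_pos rfl, zero_smul]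
        rcases Nat.eq_zero_or_pos r with hr0 | hrpos
        · rw [hr0, Matrix.mulVec_mulVec, show (0+0 : ℕ) = 0 from rfl, Estar0_Rm,
            Matrix.zero_mulVec]
        · obtain ⟨s, rfl⟩ : ∃ s, r = s+1 := ⟨r-1, by omega⟩
          rw [Matrix.mulVec_mulVec, show (s+1+0 : ℕ) = s+1 from rfl, Estar_Rm s,
            ← Matrix.mulVec_mulVec, hlow s (by omega) u huW, Matrix.mulVec_zero]
      · obtain ⟨s, rfl⟩ : ∃ s, k = s+1 := ⟨k-1, by omega⟩
        rw [if_neg hk0]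
        rw [Matrix.mulVec_mulVec, show r+(s+1) = (r+s)+1 from rfl, Estar_Rm (r+s),
          ← Matrix.mulVec_mulVec, hβ s, Matrix.mulVec_smul, Rm_vseq,
          show (s+1) - 1 = s from rfl, smul_smul]
        congr 1
        push_cast
        ring
    have lhs2 : (EstarMat D (r+k)).mulVec ((adjMat D).mulVec u)
        = (β (k+1) * ((d:ℂ) - (k:ℂ)) + (if k = 0 then 0 else β (k-1) * (k:ℂ)))
            • vseq D v0 k := by
      rw [adj_decomp, Matrix.add_mulVec, Matrix.mulVec_add, t1, t2, ← add_smul]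
    exact smul_cancel (hvne k hk) (lhs1.symm.trans lhs2)
  have hβc : ∀ k, k ≤ d → β k = β 0 := by
    intro k
    induction k using Nat.strong_induction_on with
    | _ k ih =>
      match k with
      | 0 => intro _; rfl
      | 1 =>
          intro h1
          have h := hrec 0 (by omega)
          rw [if_pos rfl, add_zero] at h
          push_cast at h
          norm_num at h
          have hdne : (d:ℂ) ≠ 0 := Nat.cast_ne_zero.mpr (by omega)
          apply mul_right_cancel₀ hdne
          linear_combination -h
      | (s+2) =>
          intro h2
          have hs1 := ih (s+1) (by omega) (by omega)
          have hs0 := ih s (by omega) (by omega)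
          have h := hrec (s+1) (by omega)
          rw [if_neg (Nat.succ_ne_zero s), hs1, show (s+1) - 1 = s from rfl, hs0] at h
          have hne : (d:ℂ) - (((s:ℂ))+1) ≠ 0 := by
            apply sub_ne_zero.mpr
            intro hc
            have : d = s+1 := by exact_mod_cast hc
            omega
          apply mul_right_cancel₀ hne
          push_cast at h ⊢
          linear_combination -h
  have hT1 : Complex.I • ((Lm D).mulVec ((EstarMat D (r+j)).mulVec u))
      = (if j = 0 then 0 else
          (Complex.I * ((d:ℂ) - (j:ℂ) + 1)) • (EstarMat D (r+j-1)).mulVec u) := by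
    by_cases hj0 : j = 0
    · rw [hj0, if_pos rfl, hβ 0, Matrix.mulVec_smul, show vseq D v0 0 = v0 from rfl, hL0,
        smul_zero, smul_zero]
    · obtain ⟨s, rfl⟩ : ∃ s, j = s+1 := ⟨j-1, by omega⟩
      rw [if_neg hj0, hβ (s+1), Matrix.mulVec_smul, hLv s,
        show r+(s+1)-1 = r+s from by omega, hβ s, hβc (s+1) hj, hβc s (by omega),
        smul_smul, smul_smul, smul_smul]
      congr 1
      push_cast
      ring
  have hT2 : Complex.I • ((Rm D).mulVec ((EstarMat D (r+j)).mulVec u))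
      = (if j = d then 0 else
          (Complex.I * ((j:ℂ) + 1)) • (EstarMat D (r+j+1)).mulVec u) := by
    by_cases hjd : j = d
    · rw [hjd, if_pos rfl, hβ d, Matrix.mulVec_smul, Rm_vseq, hzero (d+1) (by omega),
        smul_zero, smul_zero, smul_zero]
    · rw [if_neg hjd, hβ j, Matrix.mulVec_smul, Rm_vseq,
        show r+j+1 = r+(j+1) from rfl, hβ (j+1), hβc j hj, hβc (j+1) (by omega),
        smul_smul, smul_smul, smul_smul]
      congr 1
      push_cast
      ring
  rw [imag_eq, Matrix.sub_mulVec, Matrix.smul_mulVec, Matrix.smul_mulVec,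
    sub_eq_add_neg, hT1, hT2]
  congr 1
  by_cases hjd : j = d
  · rw [if_pos hjd, if_pos hjd, neg_zero]
  · rw [if_neg hjd, if_neg hjd, ← neg_smul]
end
end

section
/- Let W denote an irreducible T-module. Then A, A*, A^ε each map W into itself, and the ordered triple of operators on W obtained by restricting A, A*, A^ε to W is a Leonard triple on W. -/
noncomputable section

open Matrix Finset

/-- A square matrix is irreducible tridiagonal: every nonzero entry lies on the diagonal,
subdiagonal or superdiagonal, and every subdiagonal and superdiagonal entry is nonzero. -/
def IsIrredTridiagonal {n : ℕ} (B : Matrix (Fin n) (Fin n) ℂ) : Prop :=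
  (∀ i j : Fin n, ((i : ℕ) + 1 < (j : ℕ) ∨ (j : ℕ) + 1 < (i : ℕ)) → B i j = 0) ∧
  (∀ i j : Fin n, ((i : ℕ) + 1 = (j : ℕ) ∨ (j : ℕ) + 1 = (i : ℕ)) → B i j ≠ 0)

/-- `(Y₁, Y₂, Y₃)` is a Leonard triple on `V`: for each of the three operators there is a
basis of `V` with respect to which the matrix representing that operator is diagonal and
the matrices representing the other two are irreducible tridiagonal. -/
def IsLeonardTriple {V : Type*} [AddCommGroup V] [Module ℂ V]
    (Y₁ Y₂ Y₃ : V →ₗ[ℂ] V) : Prop :=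
  (∃ (n : ℕ) (b : Module.Basis (Fin n) ℂ V),
    (LinearMap.toMatrix b b Y₁).IsDiag ∧
    IsIrredTridiagonal (LinearMap.toMatrix b b Y₂) ∧
    IsIrredTridiagonal (LinearMap.toMatrix b b Y₃)) ∧
  (∃ (n : ℕ) (b : Module.Basis (Fin n) ℂ V),
    (LinearMap.toMatrix b b Y₂).IsDiag ∧
    IsIrredTridiagonal (LinearMap.toMatrix b b Y₃) ∧
    IsIrredTridiagonal (LinearMap.toMatrix b b Y₁)) ∧
  (∃ (n : ℕ) (b : Module.Basis (Fin n) ℂ V),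
    (LinearMap.toMatrix b b Y₃).IsDiag ∧
    IsIrredTridiagonal (LinearMap.toMatrix b b Y₁) ∧
    IsIrredTridiagonal (LinearMap.toMatrix b b Y₂))

namespace Leon


variable {D : ℕ}

/-- the set of coordinates where two vertices differ -/
def dset (y z : Vtx D) : Finset (Fin D) := Finset.univ.filter fun k => y k ≠ z k

lemma dset_comm (y z : Vtx D) : dset y z = dset z y := by
  unfold dset; ext k; simp [ne_comm]

lemma adjMat_apply (y z : Vtx D) :
    adjMat D y z = if (dset y z).card = 1 then 1 else 0 := rfl

def flip (y : Vtx D) (k : Fin D) : Vtx D := Function.update y k (!(y k))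

lemma dset_flip (y : Vtx D) (k : Fin D) : dset y (flip y k) = {k} := by
  unfold dset flip
  ext j
  simp only [Finset.mem_filter, Finset.mem_univ, true_and, Finset.mem_singleton]
  constructor
  · intro hj; by_contra hjk
    rw [Function.update_of_ne hjk] at hj; exact hj rfl
  · rintro rfl
    rw [Function.update_self]; cases y j <;> simp

lemma eq_flip_of_card_one {y w : Vtx D} (h : (dset y w).card = 1) :
    ∃ k, w = flip y k := by
  obtain ⟨k, hk⟩ := Finset.card_eq_one.mp h
  refine ⟨k, funext fun j => ?_⟩
  by_cases hjk : j = k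
  · subst hjk
    have : j ∈ dset y w := hk ▸ Finset.mem_singleton_self j
    have : y j ≠ w j := by simpa [dset] using this
    simp only [flip, Function.update_self]
    cases hyj : y j <;> cases hwj : w j <;> simp_all
  · have : j ∉ dset y w := by rw [hk]; simp [hjk]
    have : y j = w j := by simpa [dset] using this
    simp [flip, Function.update_of_ne hjk, ← this]

lemma flip_injective (y : Vtx D) : Function.Injective (flip y) := by
  intro k k' h
  by_contra hne
  have h1 : flip y k k = !(y k) := by simp [flip]
  have h2 : flip y k' k = y k := Function.update_of_ne hne _ _
  rw [h] at h1; rw [h1] at h2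
  cases y k <;> simp_all

/-- key sum lemma: summing over neighbours -/
lemma sum_adj (y : Vtx D) (g : Vtx D → ℂ) :
    ∑ w, adjMat D y w * g w = ∑ k, g (flip y k) := by
  have : ∀ w, adjMat D y w * g w = if (dset y w).card = 1 then g w else 0 := by
    intro w; rw [adjMat_apply]; split <;> simp
  simp only [this]
  rw [Finset.sum_ite, Finset.sum_const_zero, add_zero]
  refine (Finset.sum_bij (fun (k : Fin D) _ => flip y k) ?_ ?_ ?_ ?_).symm
  · intro k _; simp [dset_flip]
  · intro k _ k' _ h; exact flip_injective y h
  · intro w hw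
    simp only [Finset.mem_filter, Finset.mem_univ, true_and] at hw
    obtain ⟨k, rfl⟩ := eq_flip_of_card_one hw
    exact ⟨k, Finset.mem_univ k, rfl⟩
  · intro k _; rfl

lemma wtC (u : Vtx D) : (wt u : ℂ) = ∑ k, (if u k then (1:ℂ) else 0) := by
  unfold wt
  rw [Finset.card_filter]
  push_cast
  exact Finset.sum_congr rfl fun k _ => by by_cases h : u k <;> simp [h]

lemma wt_flip (y : Vtx D) (k : Fin D) :
    (wt (flip y k) : ℂ) = (wt y : ℂ) + (if y k then -1 else 1) := by
  rw [wtC, wtC]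
  rw [← Finset.sum_erase_add _ _ (Finset.mem_univ k), ← Finset.sum_erase_add _ _ (Finset.mem_univ k)]
  have h1 : ∀ j ∈ Finset.univ.erase k, (if flip y k j then (1:ℂ) else 0) = (if y j then 1 else 0) := by
    intro j hj
    have : j ≠ k := Finset.ne_of_mem_erase hj
    simp [flip, Function.update_of_ne this]
  rw [Finset.sum_congr rfl h1]
  have : flip y k k = !(y k) := by simp [flip]
  rw [this]
  cases y k <;> simp

lemma sum_ifwt (y : Vtx D) : ∑ k : Fin D, (if y k then (-1:ℂ) else 1) = (D:ℂ) - 2 * wt y := by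
  have : ∀ k : Fin D, (if y k then (-1:ℂ) else 1) = 1 - 2 * (if y k then 1 else 0) := by
    intro k; by_cases h : y k <;> simp [h]; ring
  rw [Finset.sum_congr rfl fun k _ => this k, Finset.sum_sub_distrib, ← Finset.mul_sum, ← wtC]
  simp [mul_comm]


variable {D : ℕ}

/-- diagonal entries of the dual adjacency matrix -/
def de {D : ℕ} (y : Vtx D) : ℂ := (D : ℂ) - 2 * (wt y : ℂ)

lemma dual_eq : dualAdjMat D = Matrix.diagonal de := rfl

lemma C_apply (y z : Vtx D) :
    imagAdjMat D y z = (-Complex.I/2) * ((de z - de y) * adjMat D y z) := by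
  rw [imagAdjMat, Matrix.smul_apply, Matrix.sub_apply, dual_eq,
    Matrix.mul_diagonal, Matrix.diagonal_mul, smul_eq_mul]
  ring

lemma adj_sq (y z : Vtx D) : adjMat D y z * adjMat D y z = adjMat D y z := by
  rw [adjMat_apply]; split <;> simp

lemma adj_symm (y z : Vtx D) : adjMat D y z = adjMat D z y := by
  rw [adjMat_apply, adjMat_apply, dset_comm]

lemma wdiff {y z : Vtx D} (h : (dset y z).card = 1) :
    (wt z : ℂ) = (wt y : ℂ) + 1 ∨ (wt z : ℂ) = (wt y : ℂ) - 1 := by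
  obtain ⟨k, rfl⟩ := eq_flip_of_card_one h
  rw [wt_flip]
  cases hk : y k <;> simp [hk] <;> ring_nf <;> simp [sub_eq_add_neg]

lemma id_ab : adjMat D * dualAdjMat D - dualAdjMat D * adjMat D
    = (2*Complex.I) • imagAdjMat D := by
  rw [imagAdjMat, smul_smul]
  have h : (2*Complex.I) * (-Complex.I/2) = 1 := by
    have := Complex.I_mul_I; ring_nf; rw [Complex.I_sq]; ring
  rw [h, one_smul]

lemma id_bc : dualAdjMat D * imagAdjMat D - imagAdjMat D * dualAdjMat D
    = (2*Complex.I) • adjMat D := by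
  ext y z
  have h1 : (dualAdjMat D * imagAdjMat D) y z = de y * imagAdjMat D y z := by
    rw [dual_eq, Matrix.diagonal_mul]
  have h2 : (imagAdjMat D * dualAdjMat D) y z = imagAdjMat D y z * de z := by
    rw [dual_eq, Matrix.mul_diagonal]
  rw [Matrix.sub_apply, Matrix.smul_apply, h1, h2, C_apply, smul_eq_mul]
  by_cases hadj : (dset y z).card = 1
  · rw [adjMat_apply, if_pos hadj]
    obtain h | h := wdiff hadj <;>
      · unfold de; rw [h]; ring
  · rw [adjMat_apply, if_neg hadj]; ring

/-- the pairing involution -/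
def sig (y z w : Vtx D) : Vtx D := fun k => Bool.xor (y k) (Bool.xor (z k) (w k))

lemma sig_invol (y z w : Vtx D) : sig y z (sig y z w) = w := by
  funext k; simp only [sig]; cases y k <;> cases z k <;> cases w k <;> rfl

lemma dset_sig_left (y z w : Vtx D) : dset y (sig y z w) = dset w z := by
  unfold dset sig; ext k
  simp only [Finset.mem_filter, Finset.mem_univ, true_and]
  cases y k <;> cases z k <;> cases w k <;> decide

lemma dset_sig_right (y z w : Vtx D) : dset (sig y z w) z = dset y w := by
  unfold dset sig; ext k
  simp only [Finset.mem_filter, Finset.mem_univ, true_and]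
  cases y k <;> cases z k <;> cases w k <;> decide

lemma agree {y z w : Vtx D} (h1 : (dset y w).card = 1) (h2 : (dset w z).card = 1)
    (hyz : y ≠ z) : ∀ k, y k = z k → w k = y k := by
  intro k hk
  by_contra hwk
  have hk1 : k ∈ dset y w := by
    simp only [dset, Finset.mem_filter, Finset.mem_univ, true_and]
    exact fun h => hwk h.symm
  obtain ⟨a, ha⟩ := Finset.card_eq_one.mp h1
  have e1 : dset y w = {k} := by
    rw [ha]; rw [ha] at hk1; rw [Finset.mem_singleton] at hk1; rw [hk1]
  have hk2 : k ∈ dset w z := by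
    simp only [dset, Finset.mem_filter, Finset.mem_univ, true_and]
    rw [hk] at hwk; exact hwk
  obtain ⟨a', ha'⟩ := Finset.card_eq_one.mp h2
  have e2 : dset w z = {k} := by
    rw [ha']; rw [ha'] at hk2; rw [Finset.mem_singleton] at hk2; rw [hk2]
  apply hyz
  funext j
  by_cases hjk : j = k
  · rw [hjk, hk]
  · have j1 : j ∉ dset y w := by rw [e1]; simp [hjk]
    have j2 : j ∉ dset w z := by rw [e2]; simp [hjk]
    simp only [dset, Finset.mem_filter, Finset.mem_univ, true_and, not_not] at j1 j2
    rw [j1, j2]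

lemma bool_aux (a b c : Bool) (h : ¬ a = b) :
    ((if c = true then (1:ℂ) else 0) + if (a ^^ (b ^^ c)) = true then (1:ℂ) else 0)
      = (if a = true then (1:ℂ) else 0) + if b = true then (1:ℂ) else 0 := by
  cases a <;> cases b <;> cases c <;> simp_all

lemma wt_sig {y z w : Vtx D} (h1 : (dset y w).card = 1) (h2 : (dset w z).card = 1)
    (hyz : y ≠ z) : (wt w : ℂ) + (wt (sig y z w) : ℂ) = (wt y : ℂ) + (wt z : ℂ) := by
  rw [wtC, wtC, wtC, wtC, ← Finset.sum_add_distrib, ← Finset.sum_add_distrib]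
  refine Finset.sum_congr rfl fun k _ => ?_
  by_cases hk : y k = z k
  · have hw := agree h1 h2 hyz k hk
    simp only [sig]
    simp only [hw, hk]
    cases z k <;> simp
  · simp only [sig]
    exact bool_aux (y k) (z k) (w k) hk
    
lemma id_ca : imagAdjMat D * adjMat D - adjMat D * imagAdjMat D
    = (2*Complex.I) • dualAdjMat D := by
  ext y z
  rw [Matrix.sub_apply, Matrix.mul_apply, Matrix.mul_apply, ← Finset.sum_sub_distrib]
  have key : ∀ w, imagAdjMat D y w * adjMat D w z - adjMat D y w * imagAdjMat D w z
      = (-Complex.I/2) * ((2 * de w - de y - de z) * (adjMat D y w * adjMat D w z)) := by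
    intro w; rw [C_apply, C_apply]; ring
  rw [Finset.sum_congr rfl fun w _ => key w, ← Finset.mul_sum]
  rw [Matrix.smul_apply, dual_eq, smul_eq_mul]
  by_cases hyz : y = z
  · subst hyz
    have hterm : ∀ w, (2 * de w - de y - de y) * (adjMat D y w * adjMat D w y)
        = adjMat D y w * (2 * de w - 2 * de y) := by
      intro w
      rw [show adjMat D w y = adjMat D y w from (adj_symm y w).symm, adj_sq]
      ring
    rw [Finset.sum_congr rfl fun w _ => hterm w, sum_adj]
    have : ∀ k, 2 * de (D := D) (flip y k) - 2 * de y = -4 * (if y k then -1 else 1) := by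
      intro k
      unfold de
      rw [wt_flip]
      cases y k <;> simp <;> ring
    rw [Finset.sum_congr rfl fun k _ => this k, ← Finset.mul_sum, sum_ifwt]
    rw [Matrix.diagonal_apply_eq]
    unfold de; ring
  · rw [Matrix.diagonal_apply_ne _ hyz]
    have hbij : Function.Bijective (sig y z) :=
      Function.Involutive.bijective (fun w => sig_invol y z w)
    set F : Vtx D → ℂ := fun w => (2 * de w - de y - de z) * (adjMat D y w * adjMat D w z)
      with hF
    have hre : ∑ w, F w = ∑ w, F (sig y z w) := (Function.Bijective.sum_comp hbij F).symm
    have hzero : ∀ w, F w + F (sig y z w) = 0 := by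
      intro w
      have ht : adjMat D y (sig y z w) * adjMat D (sig y z w) z
          = adjMat D y w * adjMat D w z := by
        rw [adjMat_apply y (sig y z w), adjMat_apply (sig y z w) z, dset_sig_left,
          dset_sig_right, adjMat_apply y w, adjMat_apply w z]
        ring
      by_cases hA : adjMat D y w * adjMat D w z = 0
      · simp only [hF, hA, ht, mul_zero, add_zero]
      · have h1 : (dset y w).card = 1 := by
          by_contra h; apply hA; rw [adjMat_apply, if_neg h]; ring
        have h2 : (dset w z).card = 1 := by
          by_contra h; apply hA; rw [adjMat_apply w z, if_neg h]; ring
        have hwt := wt_sig h1 h2 hyz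
        have hde : de (D := D) w + de (sig y z w) = de y + de z := by
          unfold de
          have : (wt w : ℂ) + (wt (sig y z w) : ℂ) = (wt y : ℂ) + (wt z : ℂ) := hwt
          linear_combination (-2 : ℂ) * this
        simp only [hF, ht]
        linear_combination (adjMat D y w * adjMat D w z) * (2 : ℂ) * hde
    have : ∑ w, F w = 0 := by
      have h2 : (∑ w, F w) + (∑ w, F w) = 0 := by
        nth_rewrite 2 [hre]
        rw [← Finset.sum_add_distrib]
        exact Finset.sum_eq_zero fun w _ => hzero w
      exact add_self_eq_zero.mp h2
    rw [this]
    ring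



universe u

lemma span_stable {V : Type u} [AddCommGroup V] [Module ℂ V] (g : V →ₗ[ℂ] V) (s : Set V)
    (hs : ∀ x ∈ s, g x ∈ Submodule.span ℂ s) :
    ∀ x ∈ Submodule.span ℂ s, g x ∈ Submodule.span ℂ s := by
  intro x hx
  induction hx using Submodule.span_induction with
  | mem x hx => exact hs x hx
  | zero => simp
  | add x y _ _ hx hy => rw [map_add]; exact Submodule.add_mem _ hx hy
  | smul c x _ hx => rw [_root_.map_smul]; exact Submodule.smul_mem _ c hx

lemma sl2_struct {V : Type u} [AddCommGroup V] [Module ℂ V] [FiniteDimensional ℂ V]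
    [Nontrivial V] (h e f : V →ₗ[ℂ] V)
    (rel1 : h ∘ₗ e - e ∘ₗ h = (2:ℂ) • e)
    (rel2 : h ∘ₗ f - f ∘ₗ h = (-2:ℂ) • f)
    (rel3 : e ∘ₗ f - f ∘ₗ e = (1:ℂ) • h)
    (irr : ∀ U : Submodule ℂ V, (∀ x ∈ U, h x ∈ U) → (∀ x ∈ U, e x ∈ U) →
      (∀ x ∈ U, f x ∈ U) → U = ⊥ ∨ U = ⊤) :
    ∃ (n : ℕ) (b : Module.Basis (Fin n) ℂ V),
      (LinearMap.toMatrix b b h).IsDiag ∧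
      (∀ i j : Fin n, LinearMap.toMatrix b b e i j ≠ 0 ↔ (i:ℕ) + 1 = (j:ℕ)) ∧
      (∀ i j : Fin n, LinearMap.toMatrix b b f i j ≠ 0 ↔ (j:ℕ) + 1 = (i:ℕ)) := by
  classical
  have raise : ∀ (μ : ℂ) (v : V), h v = μ • v → h (e v) = (μ + 2) • e v := by
    intro μ v hv
    have hr := LinearMap.congr_fun rel1 v
    simp only [LinearMap.sub_apply, LinearMap.comp_apply, LinearMap.smul_apply] at hr
    rw [sub_eq_iff_eq_add] at hr
    rw [hr, hv, _root_.map_smul]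
    module
  have lower : ∀ (μ : ℂ) (v : V), h v = μ • v → h (f v) = (μ - 2) • f v := by
    intro μ v hv
    have hr := LinearMap.congr_fun rel2 v
    simp only [LinearMap.sub_apply, LinearMap.comp_apply, LinearMap.smul_apply] at hr
    rw [sub_eq_iff_eq_add] at hr
    rw [hr, hv, _root_.map_smul]
    module
  have efid : ∀ v : V, e (f v) = f (e v) + h v := by
    intro v
    have hr := LinearMap.congr_fun rel3 v
    simp only [LinearMap.sub_apply, LinearMap.comp_apply, LinearMap.smul_apply, one_smul] at hr
    rw [sub_eq_iff_eq_add] at hr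
    rw [hr]; abel
  obtain ⟨μ₀, hμ₀⟩ := Module.End.exists_eigenvalue (h : Module.End ℂ V)
  obtain ⟨u, hu⟩ := hμ₀.exists_hasEigenvector
  have hu0 : u ≠ 0 := hu.right
  have huv : h u = μ₀ • u := hu.apply_eq_smul
  have pow_eig : ∀ k : ℕ, h ((e^k) u) = (μ₀ + 2*(k:ℕ)) • (e^k) u := by
    intro k; induction k with
    | zero => simpa using huv
    | succ n ih =>
      have hp : (e^(n+1)) u = e ((e^n) u) := by rw [pow_succ']; rfl
      rw [hp, raise _ _ ih]
      congr 1
      push_cast; ring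
  have hex : ∃ k, (e^k) u = 0 := by
    by_contra hc
    push_neg at hc
    set N := Module.finrank ℂ V with hN
    have li : LinearIndependent ℂ (fun k : Fin (N+1) => (e^(k:ℕ)) u) := by
      apply Module.End.eigenvectors_linearIndependent' (h : Module.End ℂ V)
        (fun k : Fin (N+1) => μ₀ + 2*((k:ℕ):ℂ))
      · intro k k' hkk
        simp only [add_right_inj] at hkk
        have h2 : ((k:ℕ):ℂ) = ((k':ℕ):ℂ) := by
          field_simp at hkk; exact_mod_cast hkk
        exact Fin.ext (by exact_mod_cast h2)
      · intro k
        exact ⟨Module.End.mem_eigenspace_iff.mpr (pow_eig k), hc k⟩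
    have hcard := li.fintype_card_le_finrank
    rw [Fintype.card_fin] at hcard
    omega
  set K := Nat.find hex with hKdef
  have hK0 : K ≠ 0 := by
    intro h0
    have hs := Nat.find_spec hex
    rw [← hKdef, h0] at hs
    simp at hs
    exact hu0 hs
  set v0 := (e^(K-1)) u with hv0def
  have hv00 : v0 ≠ 0 := Nat.find_min hex (Nat.sub_lt (Nat.pos_of_ne_zero hK0) one_pos)
  have hev0 : e v0 = 0 := by
    have hs : (e^K) u = 0 := Nat.find_spec hex
    have hKe : e ((e^(K-1)) u) = (e^K) u := by
      conv_rhs => rw [show K = (K-1)+1 by omega]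
      rw [pow_succ']
      rfl
    rw [hv0def, hKe, hs]
  set μ := μ₀ + 2*(((K-1:ℕ)):ℂ) with hμdef
  have hhv0 : h v0 = μ • v0 := pow_eig (K-1)
  set v : ℕ → V := fun j => (f^j) v0 with hvdef
  have hv_zero : v 0 = v0 := by simp [hvdef]
  have hv_succ : ∀ j, v (j+1) = f (v j) := by
    intro j; rw [hvdef]; simp only; rw [pow_succ']; rfl
  have hhv : ∀ j : ℕ, h (v j) = (μ - 2*(j:ℕ)) • v j := by
    intro j; induction j with
    | zero => rw [hv_zero]; simpa using hhv0
    | succ n ih =>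
      rw [hv_succ n, lower _ _ ih]
      congr 1
      push_cast; ring
  have hev : ∀ j : ℕ, e (v (j+1)) = (((j:ℕ)+1) * (μ - (j:ℕ))) • v j := by
    intro j; induction j with
    | zero =>
      rw [hv_succ 0, efid, hv_zero, hev0, map_zero, zero_add, hhv0]
      congr 1
      push_cast; ring
    | succ n ih =>
      rw [hv_succ (n+1), efid, ih, _root_.map_smul, ← hv_succ n, hhv (n+1)]
      rw [← add_smul]
      congr 1
      push_cast; ring
  have hex2 : ∃ m, v m = 0 := by
    by_contra hc
    push_neg at hc
    set N := Module.finrank ℂ V with hN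
    have li : LinearIndependent ℂ (fun k : Fin (N+1) => v (k:ℕ)) := by
      apply Module.End.eigenvectors_linearIndependent' (h : Module.End ℂ V)
        (fun k : Fin (N+1) => μ - 2*((k:ℕ):ℂ))
      · intro k k' hkk
        simp only [sub_right_inj] at hkk
        have h2 : ((k:ℕ):ℂ) = ((k':ℕ):ℂ) := by
          field_simp at hkk; exact_mod_cast hkk
        exact Fin.ext (by exact_mod_cast h2)
      · intro k
        exact ⟨Module.End.mem_eigenspace_iff.mpr (hhv k), hc k⟩
    have hcard := li.fintype_card_le_finrank
    rw [Fintype.card_fin] at hcard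
    omega
  set M := Nat.find hex2 with hMdef
  have hM0 : M ≠ 0 := by
    intro h0
    have hs := Nat.find_spec hex2
    rw [← hMdef, h0, hv_zero] at hs
    exact hv00 hs
  set d := M - 1 with hddef
  have hMd : M = d + 1 := by omega
  have hvne : ∀ j : ℕ, j ≤ d → v j ≠ 0 := fun j hj => Nat.find_min hex2 (by omega)
  have hvd1 : v (d+1) = 0 := by rw [← hMd]; exact Nat.find_spec hex2
  have hμd : μ = (d:ℕ) := by
    have h0 := hev d
    rw [hvd1, map_zero] at h0
    have h1 := (smul_eq_zero.mp h0.symm).resolve_right (hvne d le_rfl)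
    rcases mul_eq_zero.mp h1 with h2 | h2
    · exact absurd h2 (Nat.cast_add_one_ne_zero d)
    · exact sub_eq_zero.mp h2
  set w : Fin (d+1) → V := fun j => v (j:ℕ) with hwdef
  have hmemr : ∀ j : ℕ, j ≤ d → v j ∈ Submodule.span ℂ (Set.range w) :=
    fun j hj => Submodule.subset_span ⟨⟨j, by omega⟩, rfl⟩
  have hUh : ∀ x ∈ Submodule.span ℂ (Set.range w), h x ∈ Submodule.span ℂ (Set.range w) := by
    apply span_stable
    rintro x ⟨j, rfl⟩
    rw [show h (w j) = (μ - 2*((j:ℕ):ℂ)) • w j from hhv (j:ℕ)]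
    exact Submodule.smul_mem _ _ (Submodule.subset_span ⟨j, rfl⟩)
  have hUe : ∀ x ∈ Submodule.span ℂ (Set.range w), e x ∈ Submodule.span ℂ (Set.range w) := by
    apply span_stable
    rintro x ⟨j, rfl⟩
    rcases hj : (j:ℕ) with _ | m
    · rw [show e (w j) = e (v (j:ℕ)) from rfl, hj, hv_zero, hev0]
      exact Submodule.zero_mem _
    · rw [show e (w j) = e (v (j:ℕ)) from rfl, hj, hev m]
      exact Submodule.smul_mem _ _ (hmemr m (by have := j.isLt; omega))
  have hUf : ∀ x ∈ Submodule.span ℂ (Set.range w), f x ∈ Submodule.span ℂ (Set.range w) := by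
    apply span_stable
    rintro x ⟨j, rfl⟩
    rw [show f (w j) = v ((j:ℕ)+1) from (hv_succ (j:ℕ)).symm]
    by_cases hj : (j:ℕ) < d
    · exact hmemr _ (by omega)
    · have : (j:ℕ) = d := by have := j.isLt; omega
      rw [this, hvd1]
      exact Submodule.zero_mem _
  have hUtop : Submodule.span ℂ (Set.range w) = ⊤ := by
    rcases irr _ hUh hUe hUf with hbot | htop
    · exfalso
      have : v 0 ∈ (⊥ : Submodule ℂ V) := hbot ▸ hmemr 0 (by omega)
      rw [Submodule.mem_bot] at this
      exact hvne 0 (by omega) this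
    · exact htop
  have li : LinearIndependent ℂ w := by
    apply Module.End.eigenvectors_linearIndependent' (h : Module.End ℂ V)
      (fun j : Fin (d+1) => μ - 2*((j:ℕ):ℂ))
    · intro k k' hkk
      simp only [sub_right_inj] at hkk
      have h2 : ((k:ℕ):ℂ) = ((k':ℕ):ℂ) := by
        field_simp at hkk; exact_mod_cast hkk
      exact Fin.ext (by exact_mod_cast h2)
    · intro j
      exact ⟨Module.End.mem_eigenspace_iff.mpr (hhv (j:ℕ)), hvne (j:ℕ) (by have := j.isLt; omega)⟩
  let b : Module.Basis (Fin (d+1)) ℂ V := Module.Basis.mk li (le_of_eq hUtop.symm)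
  have hbj : ∀ j : Fin (d+1), b j = v (j:ℕ) := by
    intro j
    rw [show b j = w j from by rw [Module.Basis.mk_apply]]
  have repr_smul : ∀ (c : ℂ) (m i : Fin (d+1)), b.repr (c • b m) i = if m = i then c else 0 := by
    intro c m i
    rw [_root_.map_smul, Finsupp.smul_apply, Module.Basis.repr_self, Finsupp.single_apply, smul_eq_mul]
    split <;> simp
  refine ⟨d+1, b, ?_, ?_, ?_⟩
  · intro i j hij
    rw [LinearMap.toMatrix_apply, hbj j, hhv (j:ℕ), show v (j:ℕ) = b j from (hbj j).symm,
      repr_smul]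
    simp [Ne.symm hij]
  · intro i j
    rw [LinearMap.toMatrix_apply, hbj j]
    rcases hj : (j:ℕ) with _ | m
    · rw [hv_zero, hev0, map_zero]
      simp only [Finsupp.coe_zero, Pi.zero_apply, ne_eq, not_true_eq_false, false_iff]
      omega
    · have hmd : m + 1 ≤ d := by have := j.isLt; omega
      rw [hev m, show v m = (b ⟨m, by omega⟩ : V) from (hbj ⟨m, by omega⟩).symm, repr_smul]
      by_cases him : (⟨m, by omega⟩ : Fin (d+1)) = i
      · rw [if_pos him]
        have hval : ((m:ℕ):ℂ) + 1 ≠ 0 := Nat.cast_add_one_ne_zero m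
        have hne2 : μ - (m:ℕ) ≠ 0 := by
          rw [hμd, ← Nat.cast_sub (by omega : m ≤ d)]
          exact_mod_cast Nat.sub_ne_zero_of_lt (by omega)
        have hprod : ((m:ℂ) + 1) * (μ - (m:ℂ)) ≠ 0 := mul_ne_zero hval hne2
        have him' : (i:ℕ) = m := by rw [← him]
        simp [hprod, him']
      · rw [if_neg him]
        have him' : (i:ℕ) ≠ m := fun hc => him (Fin.ext (by simpa using hc.symm))
        constructor
        · intro hc; exact absurd rfl hc
        · intro hc; exact absurd (by omega : (i:ℕ) = m) him'
  · intro i j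
    rw [LinearMap.toMatrix_apply, hbj j, show f (v (j:ℕ)) = v ((j:ℕ)+1) from (hv_succ _).symm]
    by_cases hj : (j:ℕ) < d
    · rw [show v ((j:ℕ)+1) = (1:ℂ) • b ⟨(j:ℕ)+1, by omega⟩ from by
        rw [one_smul]; exact (hbj ⟨(j:ℕ)+1, by omega⟩).symm, repr_smul]
      by_cases him : (⟨(j:ℕ)+1, by omega⟩ : Fin (d+1)) = i
      · have him' : (j:ℕ)+1 = (i:ℕ) := by rw [← him]
        rw [if_pos him]
        simp [him']
      · have him' : (j:ℕ)+1 ≠ (i:ℕ) := fun hc => him (Fin.ext (by simpa using hc))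
        rw [if_neg him]
        constructor
        · intro hc; exact absurd rfl hc
        · intro hc; exact absurd hc him'
    · have hjd : (j:ℕ) = d := by have := j.isLt; omega
      rw [hjd, hvd1, map_zero]
      simp only [Finsupp.coe_zero, Pi.zero_apply, ne_eq, not_true_eq_false, false_iff]
      have := i.isLt
      omega



variable {D : ℕ} {W : Submodule ℂ (Vtx D → ℂ)}

abbrev Inv (W : Submodule ℂ (Vtx D → ℂ)) (M : Matrix (Vtx D) (Vtx D) ℂ) : Prop :=
  ∀ w ∈ W, M.mulVecLin w ∈ W

lemma inv_smul {M : Matrix (Vtx D) (Vtx D) ℂ} (c : ℂ) (hM : Inv W M) : Inv W (c • M) := by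
  intro w hw
  rw [Matrix.mulVecLin_apply, Matrix.smul_mulVec]
  exact W.smul_mem c (by simpa [Matrix.mulVecLin_apply] using hM w hw)

lemma inv_add {M N : Matrix (Vtx D) (Vtx D) ℂ} (hM : Inv W M) (hN : Inv W N) :
    Inv W (M + N) := by
  intro w hw
  rw [Matrix.mulVecLin_apply, Matrix.add_mulVec]
  exact W.add_mem (by simpa [Matrix.mulVecLin_apply] using hM w hw)
    (by simpa [Matrix.mulVecLin_apply] using hN w hw)

lemma inv_sub {M N : Matrix (Vtx D) (Vtx D) ℂ} (hM : Inv W M) (hN : Inv W N) :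
    Inv W (M - N) := by
  intro w hw
  rw [Matrix.mulVecLin_apply, Matrix.sub_mulVec]
  exact W.sub_mem (by simpa [Matrix.mulVecLin_apply] using hM w hw)
    (by simpa [Matrix.mulVecLin_apply] using hN w hw)

lemma inv_mul {M N : Matrix (Vtx D) (Vtx D) ℂ} (hM : Inv W M) (hN : Inv W N) :
    Inv W (M * N) := by
  intro w hw
  rw [Matrix.mulVecLin_apply, ← Matrix.mulVec_mulVec]
  exact hM _ (hN w hw)

/-- restriction of a matrix action to an invariant subspace -/
def res (W : Submodule ℂ (Vtx D → ℂ)) (M : Matrix (Vtx D) (Vtx D) ℂ) (hM : Inv W M) :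
    Module.End ℂ W := (M.mulVecLin).restrict hM

lemma res_coe (M : Matrix (Vtx D) (Vtx D) ℂ) (hM : Inv W M) (x : W) :
    (res W M hM x : Vtx D → ℂ) = M.mulVec x := rfl

lemma res_comm {M N K : Matrix (Vtx D) (Vtx D) ℂ} (hM : Inv W M) (hN : Inv W N)
    (hK : Inv W K) (c : ℂ) (hrel : M * N - N * M = c • K) :
    res W M hM ∘ₗ res W N hN - res W N hN ∘ₗ res W M hM = c • res W K hK := by
  refine LinearMap.ext fun x => Subtype.ext ?_
  have h0 := congrArg (fun P : Matrix (Vtx D) (Vtx D) ℂ => P.mulVec (x : Vtx D → ℂ)) hrel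
  simp only [Matrix.sub_mulVec, Matrix.smul_mulVec, ← Matrix.mulVec_mulVec] at h0
  simpa [LinearMap.sub_apply, LinearMap.comp_apply, LinearMap.smul_apply, res_coe] using h0

lemma res_lin {M N K : Matrix (Vtx D) (Vtx D) ℂ} (hM : Inv W M) (hN : Inv W N)
    (hK : Inv W K) (α β : ℂ) (hrel : K = α • M + β • N) :
    res W K hK = α • res W M hM + β • res W N hN := by
  refine LinearMap.ext fun x => Subtype.ext ?_
  have h0 := congrArg (fun P : Matrix (Vtx D) (Vtx D) ℂ => P.mulVec (x : Vtx D → ℂ)) hrel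
  simp only [Matrix.add_mulVec, Matrix.smul_mulVec] at h0
  simpa [LinearMap.add_apply, LinearMap.smul_apply, res_coe] using h0

lemma tri_sum {n : ℕ} (E F : Matrix (Fin n) (Fin n) ℂ) (α β : ℂ) (hα : α ≠ 0) (hβ : β ≠ 0)
    (hE : ∀ i j : Fin n, E i j ≠ 0 ↔ (i:ℕ)+1 = (j:ℕ)) (hF : ∀ i j : Fin n, F i j ≠ 0 ↔ (j:ℕ)+1 = (i:ℕ)) :
    IsIrredTridiagonal (α • E + β • F) := by
  constructor
  · intro i j hij
    have hE0 : E i j = 0 := by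
      by_contra hc; have := (hE i j).mp hc; omega
    have hF0 : F i j = 0 := by
      by_contra hc; have := (hF i j).mp hc; omega
    simp [hE0, hF0]
  · intro i j hij
    rcases hij with hij | hij
    · have hF0 : F i j = 0 := by
        by_contra hc; have := (hF i j).mp hc; omega
      have hE1 : E i j ≠ 0 := (hE i j).mpr hij
      simp only [Matrix.add_apply, Matrix.smul_apply, hF0, smul_eq_mul, mul_zero, add_zero]
      exact mul_ne_zero hα hE1
    · have hE0 : E i j = 0 := by
        by_contra hc; have := (hE i j).mp hc; omega
      have hF1 : F i j ≠ 0 := (hF i j).mpr hij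
      simp only [Matrix.add_apply, Matrix.smul_apply, hE0, smul_eq_mul, mul_zero, zero_add]
      exact mul_ne_zero hβ hF1

lemma case_lemma (X Y Z : Matrix (Vtx D) (Vtx D) ℂ)
    (hX : Inv W X) (hY : Inv W Y) (hZ : Inv W Z) (hnt : Nontrivial W)
    (idXY : X*Y - Y*X = (2*Complex.I) • Z)
    (idYZ : Y*Z - Z*Y = (2*Complex.I) • X)
    (idZX : Z*X - X*Z = (2*Complex.I) • Y)
    (irr : ∀ U : Submodule ℂ W, (∀ x ∈ U, res W X hX x ∈ U) → (∀ x ∈ U, res W Y hY x ∈ U) →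
      (∀ x ∈ U, res W Z hZ x ∈ U) → U = ⊥ ∨ U = ⊤) :
    ∃ (n : ℕ) (b : Module.Basis (Fin n) ℂ W),
      (LinearMap.toMatrix b b (res W X hX)).IsDiag ∧
      IsIrredTridiagonal (LinearMap.toMatrix b b (res W Y hY)) ∧
      IsIrredTridiagonal (LinearMap.toMatrix b b (res W Z hZ)) := by
  haveI := hnt
  set Em : Matrix (Vtx D) (Vtx D) ℂ := (1/2 : ℂ) • Y + (Complex.I/2) • Z with hEm
  set Fm : Matrix (Vtx D) (Vtx D) ℂ := (1/2 : ℂ) • Y + (-Complex.I/2) • Z with hFm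
  have hInvE : Inv W Em := inv_add (inv_smul _ hY) (inv_smul _ hZ)
  have hInvF : Inv W Fm := inv_add (inv_smul _ hY) (inv_smul _ hZ)
  have hXY : X*Y = Y*X + (2*Complex.I) • Z := by rw [← idXY]; abel
  have hXZ : X*Z = Z*X - (2*Complex.I) • Y := by rw [← idZX]; abel
  have hYZ : Y*Z = Z*Y + (2*Complex.I) • X := by rw [← idYZ]; abel
  have rel1m : X * Em - Em * X = (2:ℂ) • Em := by
    simp only [hEm, Matrix.mul_add, Matrix.add_mul, Matrix.mul_smul, Matrix.smul_mul, hXY, hXZ]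
    match_scalars <;> simp [Complex.ext_iff] <;> norm_num
  have rel2m : X * Fm - Fm * X = (-2:ℂ) • Fm := by
    simp only [hFm, Matrix.mul_add, Matrix.add_mul, Matrix.mul_smul, Matrix.smul_mul, hXY, hXZ]
    match_scalars <;> simp [Complex.ext_iff] <;> norm_num
  have rel3m : Em * Fm - Fm * Em = (1:ℂ) • X := by
    simp only [hEm, hFm, Matrix.mul_add, Matrix.add_mul, Matrix.mul_smul, Matrix.smul_mul, hYZ]
    match_scalars <;> simp [Complex.ext_iff] <;> norm_num <;> norm_num
  have hYlin : res W Y hY = (1:ℂ) • res W Em hInvE + (1:ℂ) • res W Fm hInvF := by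
    apply res_lin
    rw [hEm, hFm]
    match_scalars <;> simp [Complex.ext_iff] <;> norm_num
  have hZlin : res W Z hZ = (-Complex.I) • res W Em hInvE + Complex.I • res W Fm hInvF := by
    apply res_lin
    rw [hEm, hFm]
    match_scalars <;> simp [Complex.ext_iff] <;> norm_num
  obtain ⟨n, b, hdiag, hEmat, hFmat⟩ :=
    sl2_struct (res W X hX) (res W Em hInvE) (res W Fm hInvF)
      (res_comm hX hInvE hInvE 2 rel1m)
      (res_comm hX hInvF hInvF (-2) rel2m)
      (res_comm hInvE hInvF hX 1 rel3m)
      (by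
        intro U hh he hf
        apply irr U hh
        · intro x hx
          rw [hYlin]
          simp only [LinearMap.add_apply, LinearMap.smul_apply, one_smul]
          exact U.add_mem (he x hx) (hf x hx)
        · intro x hx
          rw [hZlin]
          simp only [LinearMap.add_apply, LinearMap.smul_apply]
          exact U.add_mem (U.smul_mem _ (he x hx)) (U.smul_mem _ (hf x hx)))
  refine ⟨n, b, hdiag, ?_, ?_⟩
  · rw [hYlin, (LinearMap.toMatrix b b).map_add, (LinearMap.toMatrix b b).map_smul,
      (LinearMap.toMatrix b b).map_smul]
    exact tri_sum _ _ _ _ one_ne_zero one_ne_zero hEmat hFmat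
  · rw [hZlin, (LinearMap.toMatrix b b).map_add, (LinearMap.toMatrix b b).map_smul,
      (LinearMap.toMatrix b b).map_smul]
    exact tri_sum _ _ _ _ (neg_ne_zero.mpr Complex.I_ne_zero) Complex.I_ne_zero hEmat hFmat


end Leon

/-- For an irreducible `T`-module `W`, the matrices `A`, `A*`, `Aᵉ` each map
`W` into itself, and the triple of restrictions of `A`, `A*`, `Aᵉ` to `W` is a Leonard
triple on `W`. -/
theorem leonard_triple_on_irreducible_module (D : ℕ) (hD : 0 < D)
    (W : Submodule ℂ (Vtx D → ℂ)) (hW : IsIrredTMod D W) :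
    ∃ (hA : ∀ w ∈ W, (adjMat D).mulVecLin w ∈ W)
      (hAs : ∀ w ∈ W, (dualAdjMat D).mulVecLin w ∈ W)
      (hAe : ∀ w ∈ W, (imagAdjMat D).mulVecLin w ∈ W),
      IsLeonardTriple ((adjMat D).mulVecLin.restrict hA)
        ((dualAdjMat D).mulVecLin.restrict hAs)
        ((imagAdjMat D).mulVecLin.restrict hAe) := by
  
  classical
  obtain ⟨⟨hA0, hAs0⟩, hWbot, hWirr⟩ := hW
  have hA : Leon.Inv W (adjMat D) := fun w hw => by
    rw [Matrix.mulVecLin_apply]; exact hA0 w hw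
  have hAs : Leon.Inv W (dualAdjMat D) := fun w hw => by
    rw [Matrix.mulVecLin_apply]; exact hAs0 w hw
  have hAe : Leon.Inv W (imagAdjMat D) :=
    Leon.inv_smul _ (Leon.inv_sub (Leon.inv_mul hA hAs) (Leon.inv_mul hAs hA))
  haveI hnt : Nontrivial W := Submodule.nontrivial_iff_ne_bot.mpr hWbot
  have key : ∀ U : Submodule ℂ W, (∀ x ∈ U, Leon.res W (adjMat D) hA x ∈ U) →
      (∀ x ∈ U, Leon.res W (dualAdjMat D) hAs x ∈ U) → U = ⊥ ∨ U = ⊤ := by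
    intro U hUA hUB
    have hinj := Submodule.map_injective_of_injective W.injective_subtype
    have hmap : IsTMod D (U.map W.subtype) := by
      constructor
      · intro w hw
        obtain ⟨u, hu, rfl⟩ := Submodule.mem_map.mp hw
        exact Submodule.mem_map.mpr ⟨Leon.res W (adjMat D) hA u, hUA u hu, rfl⟩
      · intro w hw
        obtain ⟨u, hu, rfl⟩ := Submodule.mem_map.mp hw
        exact Submodule.mem_map.mpr ⟨Leon.res W (dualAdjMat D) hAs u, hUB u hu, rfl⟩
    rcases hWirr (U.map W.subtype) hmap (Submodule.map_subtype_le W U) with hb | ht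
    · left; exact hinj (by rw [hb, Submodule.map_bot])
    · right; exact hinj (by rw [ht, Submodule.map_subtype_top])
  refine ⟨hA, hAs, hAe, ?_, ?_, ?_⟩
  · exact Leon.case_lemma (adjMat D) (dualAdjMat D) (imagAdjMat D) hA hAs hAe hnt
      Leon.id_ab Leon.id_bc Leon.id_ca (fun U h1 h2 h3 => key U h1 h2)
  · exact Leon.case_lemma (dualAdjMat D) (imagAdjMat D) (adjMat D) hAs hAe hA hnt
      Leon.id_bc Leon.id_ca Leon.id_ab (fun U h1 h2 h3 => key U h3 h1)
  · exact Leon.case_lemma (imagAdjMat D) (adjMat D) (dualAdjMat D) hAe hA hAs hnt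
      Leon.id_ca Leon.id_ab Leon.id_bc (fun U h1 h2 h3 => key U h2 h3)
end
end
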